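/- arXiv:2302.10814 — 6 statements merged into one kernel-verified Lean document; each statement's English description precedes it below -/
import Mathlib

section
/- Let n ≥ 0. A noncrossing partition of size n is uniquely determined by its sets of left and right endpoints: if λ and μ are noncrossing partitions of size n with λ⁺ = μ⁺ and λ⁻ = μ⁻, then λ = μ. Moreover, given two subsets L, R ⊆ {1,…,n} with |L| = |R|, the inequalities |{1,…,k−1} ∩ L| ≥ |{1,…,k} ∩ R| hold for all k ≥ 1 if and only if there exists a noncrossing partition λ of size n with L = λ⁺ and R = λ⁻. -/
open scoped Classical

noncomputable section

/-- `IsNCP n A` : `A` is the arc set of a noncrossing partition of size `n`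
(arcs `(i,j)` with `i < j`; no two distinct arcs `(i,k)`, `(j,l)` with `i ≤ j < k ≤ l`,
i.e. no crossings and no shared endpoints). -/
def IsNCP (n : ℕ) (A : Finset (Fin n × Fin n)) : Prop :=
  (∀ p ∈ A, p.1 < p.2) ∧
    ∀ p ∈ A, ∀ q ∈ A, p ≠ q → ¬(p.1 ≤ q.1 ∧ q.1 < p.2 ∧ p.2 ≤ q.2)

/-- Noncrossing partitions of size `n` (labelled `1, …, n`, realized as `Fin n`). -/
def NCP (n : ℕ) : Type := {A : Finset (Fin n × Fin n) // IsNCP n A}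

noncomputable instance (n : ℕ) : Fintype (NCP n) := by
  unfold NCP; infer_instance

namespace NCP

variable {n : ℕ}

/-- The set `λ⁺` of left endpoints of arcs. -/
def lpos (lam : NCP n) : Finset (Fin n) := lam.1.image Prod.fst

/-- The set `λ⁻` of right endpoints of arcs. -/
def rpos (lam : NCP n) : Finset (Fin n) := lam.1.image Prod.snd

/-- `a` and `b` lie in the same connected component of `λ` viewed as a graph. -/
def Connected (lam : NCP n) (a b : Fin n) : Prop :=
  Relation.ReflTransGen (fun x y => (x, y) ∈ lam.1 ∨ (y, x) ∈ lam.1) a b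

/-- The connected component of `j` in `λ`. -/
def component (lam : NCP n) (j : Fin n) : Finset (Fin n) :=
  Finset.univ.filter fun i => Connected lam j i

theorem mem_component_self (lam : NCP n) (j : Fin n) : j ∈ component lam j :=
  Finset.mem_filter.mpr ⟨Finset.mem_univ j, Relation.ReflTransGen.refl⟩

/-- The largest element of the connected component of `j` in `λ`. -/
def compMax (lam : NCP n) (j : Fin n) : Fin n :=
  (component lam j).max' ⟨j, mem_component_self lam j⟩

/-- The function underlying the permutation `Q_λ` : `j ↦ i` if `(i,j)` is an arc of `λ`,
and `j ↦` the largest element of the connected component of `j` otherwise. -/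
def Qfun (lam : NCP n) (j : Fin n) : Fin n :=
  if h : ∃ i, (i, j) ∈ lam.1 then h.choose else compMax lam j

/-- `Q` is the permutation `Q_λ`. -/
def IsQ (lam : NCP n) (Q : Equiv.Perm (Fin n)) : Prop :=
  ∀ j, Q j = Qfun lam j

/-- `T` is the permutation `T_λ` : the bijection mapping `λ⁻` onto `λ⁺` in an
order-preserving way and the complement of `λ⁻` onto the complement of `λ⁺` in an
order-preserving way. -/
def IsT (lam : NCP n) (T : Equiv.Perm (Fin n)) : Prop :=
  (∀ j, j ∈ rpos lam ↔ T j ∈ lpos lam) ∧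
  (∀ j j', j ∈ rpos lam → j' ∈ rpos lam → j < j' → T j < T j') ∧
  (∀ j j', j ∉ rpos lam → j' ∉ rpos lam → j < j' → T j < T j')

end NCP

/-- Weak excedance positions `E_pos(w) = {i : i ≤ w(i)}`. -/
def ExcPos {n : ℕ} (w : Equiv.Perm (Fin n)) : Finset (Fin n) :=
  Finset.univ.filter fun i => i ≤ w i

/-- Weak excedance values `E_val(w) = {w(i) : i ≤ w(i)}`. -/
def ExcVal {n : ℕ} (w : Equiv.Perm (Fin n)) : Finset (Fin n) :=
  (ExcPos w).image w

/-- The excedance relation `∼`. -/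
def ExcEq {n : ℕ} (v w : Equiv.Perm (Fin n)) : Prop :=
  ExcVal v = ExcVal w ∧ ExcPos v = ExcPos w

/-- The excedance relation as a setoid on `S_n`. -/
def excSetoid (n : ℕ) : Setoid (Equiv.Perm (Fin n)) where
  r := ExcEq
  iseqv := ⟨fun _ => ⟨rfl, rfl⟩, fun h => ⟨h.1.symm, h.2.symm⟩,
    fun h h' => ⟨h.1.trans h'.1, h.2.trans h'.2⟩⟩

namespace NCP

/-- The excedance class `C_λ`. -/
def Cset {n : ℕ} (lam : NCP n) : Set (Equiv.Perm (Fin n)) :=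
  {w | ExcVal w = Finset.univ \ lpos lam ∧ ExcPos w = Finset.univ \ rpos lam}

end NCP

/-- Number of inversions of a permutation. -/
def bruhatLen {n : ℕ} (w : Equiv.Perm (Fin n)) : ℕ :=
  (Finset.univ.filter fun p : Fin n × Fin n => p.1 < p.2 ∧ w p.2 < w p.1).card

/-- The Bruhat order on `S_n` : generated by `v < w` whenever `w v⁻¹` is a
transposition and `ℓ(v) < ℓ(w)`. -/
def BruhatLE {n : ℕ} (v w : Equiv.Perm (Fin n)) : Prop :=
  Relation.ReflTransGen (fun a b => (b * a⁻¹).IsSwap ∧ bruhatLen a < bruhatLen b) v w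

/-- Strict Bruhat order. -/
def BruhatLT {n : ℕ} (v w : Equiv.Perm (Fin n)) : Prop :=
  BruhatLE v w ∧ v ≠ w

/-- `λ` is covered by `μ` : `λ` is obtained from `μ` by removing an arc `(i, i+1)`,
or by replacing an arc `(i,k)` by two arcs `(i,j)`, `(j,k)` with `i < j < k`
(validity of the result is enforced by `λ` being a noncrossing partition). -/
def NCPCovBy {n : ℕ} (lam mu : NCP n) : Prop :=
  (∃ i j : Fin n, (j : ℕ) = (i : ℕ) + 1 ∧ (i, j) ∈ mu.1 ∧ lam.1 = mu.1.erase (i, j)) ∨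
  (∃ i j k : Fin n, i < j ∧ j < k ∧ (i, k) ∈ mu.1 ∧
      lam.1 = insert (i, j) (insert (j, k) (mu.1.erase (i, k))))

/-- The partial order `⪯` on noncrossing partitions generated by the covering relation. -/
def NCPle {n : ℕ} (lam mu : NCP n) : Prop :=
  Relation.ReflTransGen (fun a b => NCPCovBy a b) lam mu

/-- The defining relations of the Temperley–Lieb algebra `TL_n(2)`. -/
inductive TLRel (n : ℕ) : FreeAlgebra ℂ (Fin (n - 1)) → FreeAlgebra ℂ (Fin (n - 1)) → Prop
  | sq (i : Fin (n - 1)) :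
      TLRel n (FreeAlgebra.ι ℂ i * FreeAlgebra.ι ℂ i) (2 * FreeAlgebra.ι ℂ i)
  | far (i j : Fin (n - 1)) (h : (i : ℕ) + 1 < (j : ℕ) ∨ (j : ℕ) + 1 < (i : ℕ)) :
      TLRel n (FreeAlgebra.ι ℂ i * FreeAlgebra.ι ℂ j) (FreeAlgebra.ι ℂ j * FreeAlgebra.ι ℂ i)
  | near (i j : Fin (n - 1)) (h : (i : ℕ) + 1 = (j : ℕ) ∨ (j : ℕ) + 1 = (i : ℕ)) :
      TLRel n (FreeAlgebra.ι ℂ i * FreeAlgebra.ι ℂ j * FreeAlgebra.ι ℂ i) (FreeAlgebra.ι ℂ i)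

/-- The Temperley–Lieb algebra `TL_n(2)`. -/
abbrev TL (n : ℕ) := RingQuot (TLRel n)

/-- The generator `e_i` of `TL_n(2)`. -/
def TLgen (n : ℕ) (i : Fin (n - 1)) : TL n :=
  RingQuot.mkAlgHom ℂ (TLRel n) (FreeAlgebra.ι ℂ i)

/-- The simple transposition `s_i = (i, i+1)` in `S_n`. -/
def simpleTransposition (n : ℕ) (i : Fin (n - 1)) : Equiv.Perm (Fin n) :=
  Equiv.swap ⟨i.val, lt_of_lt_of_le i.isLt (Nat.sub_le n 1)⟩
    ⟨i.val + 1, by have h := i.isLt; omega⟩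

open MvPolynomial

/-- The monomial quasisymmetric polynomial `M_α` in `n` variables,
for a composition `α = (α 0, …, α (k-1))`. -/
noncomputable def Mpoly (n k : ℕ) (α : Fin k → ℕ) : MvPolynomial (Fin n) ℚ :=
  ∑ c ∈ Finset.univ.filter (fun c : Fin k → Fin n => StrictMono c),
    ∏ s : Fin k, X (c s) ^ α s

/-- The vanishing polynomial `P_α`.  The sum over pairs (a coarsening `β ⪰ α` with
blocks witnessed by `1 = f_1 < ⋯ < f_{ℓ+1} = k+1`, and indices `i_1 < ⋯ < i_ℓ`)
is re-indexed by monotone maps `c : Fin k → Fin n`: the fibers of `c` are the blocks of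
the coarsening, and `c` sends the `j`-th block to `i_j`.  The variable with 1-based label
`i` is `x_i`, so the rational constant attached to `c s : Fin n` is `(c s : ℕ) + 1`. -/
noncomputable def Ppoly (n k : ℕ) (α : Fin k → ℕ) : MvPolynomial (Fin n) ℚ :=
  ∑ c ∈ Finset.univ.filter (fun c : Fin k → Fin n => Monotone c),
    ∏ s : Fin k,
      if ∀ t, t < s → c t < c s then
        X (c s) ^ α s - C ((((c s : ℕ) : ℚ) + 1) ^ α s)
      else C ((-(((c s : ℕ) : ℚ) + 1)) ^ α s)

/-- The top-degree homogeneous component `h(f)`. -/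
noncomputable def topHom {n : ℕ} (f : MvPolynomial (Fin n) ℚ) : MvPolynomial (Fin n) ℚ :=
  MvPolynomial.homogeneousComponent f.totalDegree f

/-- The set `QSV_n ⊆ S_n`. -/
def QSVset (n : ℕ) : Set (Equiv.Perm (Fin n)) := {σ | ∃ lam : NCP n, NCP.IsQ lam σ}

/-- The point `(σ(1), …, σ(n)) ∈ ℚⁿ` associated to a permutation (1-based labels). -/
def permPoint {n : ℕ} (σ : Equiv.Perm (Fin n)) : Fin n → ℚ := fun i => ((σ i : ℕ) : ℚ) + 1

/-- `QSV_n` as a set of points in `ℚⁿ`. -/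
def QSVpoints (n : ℕ) : Set (Fin n → ℚ) := {p | ∃ σ ∈ QSVset n, p = permPoint σ}

/-- The vanishing ideal of a set of points in `ℚⁿ`. -/
noncomputable def vanishingIdeal (n : ℕ) (S : Set (Fin n → ℚ)) :
    Ideal (MvPolynomial (Fin n) ℚ) where
  carrier := {f | ∀ p ∈ S, MvPolynomial.eval p f = 0}
  add_mem' := by
    intro a b ha hb p hp
    simp [map_add, ha p hp, hb p hp]
  zero_mem' := by
    intro p hp
    simp
  smul_mem' := by
    intro c f hf p hp
    simp [smul_eq_mul, map_mul, hf p hp]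

/-- The monomial quasisymmetric polynomials `M_α` for nonempty compositions `α`
with `ℓ(α) ≤ n`. -/
def MpolySet (n : ℕ) : Set (MvPolynomial (Fin n) ℚ) :=
  {f | ∃ k, ∃ α : Fin k → ℕ, 0 < k ∧ k ≤ n ∧ (∀ s, 0 < α s) ∧ f = Mpoly n k α}

/-- The vanishing polynomials `P_α` for nonempty compositions `α` with `ℓ(α) ≤ n`. -/
def PpolySet (n : ℕ) : Set (MvPolynomial (Fin n) ℚ) :=
  {f | ∃ k, ∃ α : Fin k → ℕ, 0 < k ∧ k ≤ n ∧ (∀ s, 0 < α s) ∧ f = Ppoly n k α}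

/-- The space `QSym_n` of quasisymmetric polynomials : the span of `1` and the `M_α`. -/
def QSym (n : ℕ) : Submodule ℚ (MvPolynomial (Fin n) ℚ) :=
  Submodule.span ℚ (insert 1 (MpolySet n))

/-- `QSym_n⁺` : quasisymmetric polynomials with zero constant term. -/
def QSymPlus (n : ℕ) : Set (MvPolynomial (Fin n) ℚ) :=
  {f | f ∈ QSym n ∧ MvPolynomial.constantCoeff f = 0}

/-- `gr(I) = ⟨h(f) : f ∈ I⟩`. -/
noncomputable def grIdeal (n : ℕ) (I : Ideal (MvPolynomial (Fin n) ℚ)) :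
    Ideal (MvPolynomial (Fin n) ℚ) :=
  Ideal.span (topHom '' (I : Set (MvPolynomial (Fin n) ℚ)))

section NCPAux

variable {n : ℕ}

lemma NCPAux.left_unique {A : Finset (Fin n × Fin n)} (h : IsNCP n A)
    {i j j' : Fin n} (h1 : (i, j) ∈ A) (h2 : (i, j') ∈ A) : j = j' := by
  by_contra hne
  rcases lt_or_gt_of_ne hne with hlt | hlt
  · exact h.2 _ h1 _ h2 (by simp [hne]) ⟨le_rfl, h.1 _ h1, le_of_lt hlt⟩
  · exact h.2 _ h2 _ h1 (by simp [Ne.symm hne]) ⟨le_rfl, h.1 _ h2, le_of_lt hlt⟩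

lemma NCPAux.right_unique {A : Finset (Fin n × Fin n)} (h : IsNCP n A)
    {i i' j : Fin n} (h1 : (i, j) ∈ A) (h2 : (i', j) ∈ A) : i = i' := by
  by_contra hne
  rcases lt_or_gt_of_ne hne with hlt | hlt
  · exact h.2 _ h1 _ h2 (by simp [hne]) ⟨le_of_lt hlt, h.1 _ h2, le_rfl⟩
  · exact h.2 _ h2 _ h1 (by simp [Ne.symm hne]) ⟨le_of_lt hlt, h.1 _ h1, le_rfl⟩

lemma NCPAux.exists_partner (lam : NCP n) {j : Fin n} (hj : j ∈ NCP.rpos lam) :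
    ∃ i, (i, j) ∈ lam.1 := by
  obtain ⟨⟨a, b⟩, hp, hpj⟩ := Finset.mem_image.mp hj
  have hbj : b = j := hpj
  subst hbj
  exact ⟨a, hp⟩

lemma NCPAux.ballot_of_ncp (lam : NCP n) (k : ℕ) :
    ((NCP.rpos lam).filter (fun i : Fin n => (i : ℕ) < k)).card ≤
      ((NCP.lpos lam).filter (fun i : Fin n => (i : ℕ) + 1 < k)).card := by
  classical
  set f : Fin n → Fin n :=
    fun j => if h : ∃ i, (i, j) ∈ lam.1 then h.choose else j with hfdef
  have hf : ∀ j ∈ NCP.rpos lam, (f j, j) ∈ lam.1 := by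
    intro j hj
    have h := NCPAux.exists_partner lam hj
    simp only [hfdef, dif_pos h]
    exact h.choose_spec
  apply Finset.card_le_card_of_injOn f
  · intro j hj
    obtain ⟨hjR, hjk⟩ := Finset.mem_filter.mp hj
    have harc := hf j hjR
    have hlt : f j < j := lam.2.1 _ harc
    refine Finset.mem_filter.mpr ⟨Finset.mem_image_of_mem Prod.fst harc, ?_⟩
    have := Fin.lt_def.mp hlt
    omega
  · intro j hj j' hj' hjj'
    have harc := hf j (Finset.mem_filter.mp (by exact hj)).1
    have harc' := hf j' (Finset.mem_filter.mp (by exact hj')).1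
    rw [hjj'] at harc
    exact NCPAux.left_unique lam.2 harc harc'

lemma NCPAux.unique_arc_min (lam : NCP n) {i j : Fin n} (hij : (i, j) ∈ lam.1)
    (hjmin : ∀ r ∈ NCP.rpos lam, j ≤ r) {a : Fin n} (ha : a ∈ NCP.lpos lam)
    (haj : a < j) : a ≤ i := by
  by_contra hia
  push_neg at hia
  obtain ⟨⟨a', b⟩, hab, ha'⟩ := Finset.mem_image.mp ha
  subst ha'
  have hjb : j ≤ b := hjmin b (Finset.mem_image_of_mem Prod.snd hab)
  refine lam.2.2 (i, j) hij _ hab ?_ ⟨le_of_lt hia, haj, hjb⟩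
  intro h
  have : i = (i, j).1 := rfl
  rw [h] at this
  exact absurd this (ne_of_lt hia)

lemma NCPAux.isNCP_erase (lam : NCP n) (p : Fin n × Fin n) :
    IsNCP n (lam.1.erase p) :=
  ⟨fun q hq => lam.2.1 q (Finset.mem_of_mem_erase hq),
   fun a ha b hb => lam.2.2 a (Finset.mem_of_mem_erase ha) b (Finset.mem_of_mem_erase hb)⟩

lemma NCPAux.lpos_erase (lam : NCP n) {i j : Fin n} (hij : (i, j) ∈ lam.1) :
    (lam.1.erase (i, j)).image Prod.fst = (NCP.lpos lam).erase i := by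
  ext a
  constructor
  · intro h
    obtain ⟨⟨a', b⟩, hp, rfl⟩ := Finset.mem_image.mp h
    obtain ⟨hpne, hpA⟩ := Finset.mem_erase.mp hp
    refine Finset.mem_erase.mpr ⟨?_, Finset.mem_image_of_mem Prod.fst hpA⟩
    intro hai
    subst hai
    exact hpne (by rw [NCPAux.left_unique lam.2 hpA hij])
  · intro h
    obtain ⟨hai, haL⟩ := Finset.mem_erase.mp h
    obtain ⟨⟨a', b⟩, hpA, rfl⟩ := Finset.mem_image.mp haL
    refine Finset.mem_image.mpr ⟨(a', b), Finset.mem_erase.mpr ⟨?_, hpA⟩, rfl⟩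
    intro hpij
    exact hai (congrArg Prod.fst hpij)

lemma NCPAux.rpos_erase (lam : NCP n) {i j : Fin n} (hij : (i, j) ∈ lam.1) :
    (lam.1.erase (i, j)).image Prod.snd = (NCP.rpos lam).erase j := by
  ext a
  constructor
  · intro h
    obtain ⟨⟨a', b⟩, hp, rfl⟩ := Finset.mem_image.mp h
    obtain ⟨hpne, hpA⟩ := Finset.mem_erase.mp hp
    refine Finset.mem_erase.mpr ⟨?_, Finset.mem_image_of_mem Prod.snd hpA⟩
    intro hbj
    subst hbj
    exact hpne (by rw [NCPAux.right_unique lam.2 hpA hij])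
  · intro h
    obtain ⟨hbj, hbR⟩ := Finset.mem_erase.mp h
    obtain ⟨⟨a', b⟩, hpA, rfl⟩ := Finset.mem_image.mp hbR
    refine Finset.mem_image.mpr ⟨(a', b), Finset.mem_erase.mpr ⟨?_, hpA⟩, rfl⟩
    intro hpij
    exact hbj (congrArg Prod.snd hpij)

lemma NCPAux.card_rpos (lam : NCP n) : (NCP.rpos lam).card = lam.1.card := by
  apply Finset.card_image_of_injOn
  rintro ⟨a, b⟩ hp ⟨a', b'⟩ hq hpq
  simp only at hpq
  subst hpq
  rw [NCPAux.right_unique lam.2 hp hq]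

lemma NCPAux.ncp_unique (m : ℕ) : ∀ lam mu : NCP n, lam.1.card = m →
    NCP.lpos lam = NCP.lpos mu → NCP.rpos lam = NCP.rpos mu → lam = mu := by
  induction m with
  | zero =>
    intro lam mu hcard hL hR
    have hlam : lam.1 = ∅ := Finset.card_eq_zero.mp hcard
    have hmu : mu.1 = ∅ := by
      have : NCP.rpos mu = ∅ := by
        rw [← hR]
        simp [NCP.rpos, hlam]
      exact Finset.image_eq_empty.mp this
    exact Subtype.ext (hlam.trans hmu.symm)
  | succ m ih =>
    intro lam mu hcard hL hR
    have hne : lam.1.Nonempty := Finset.card_pos.mp (by omega)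
    have hRne : (NCP.rpos lam).Nonempty := hne.image _
    set j := (NCP.rpos lam).min' hRne with hjdef
    have hjlam : j ∈ NCP.rpos lam := (NCP.rpos lam).min'_mem hRne
    have hjmu : j ∈ NCP.rpos mu := hR ▸ hjlam
    obtain ⟨i, hilam⟩ := NCPAux.exists_partner lam hjlam
    obtain ⟨i', himu⟩ := NCPAux.exists_partner mu hjmu
    have hjmin : ∀ r ∈ NCP.rpos lam, j ≤ r := fun r hr => (NCP.rpos lam).min'_le r hr
    have hjmin' : ∀ r ∈ NCP.rpos mu, j ≤ r := by rw [← hR]; exact hjmin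
    have hii' : i = i' := by
      apply le_antisymm
      · exact NCPAux.unique_arc_min mu himu hjmin'
          (hL ▸ Finset.mem_image_of_mem Prod.fst hilam) (lam.2.1 _ hilam)
      · exact NCPAux.unique_arc_min lam hilam hjmin
          (hL ▸ Finset.mem_image_of_mem Prod.fst himu) (mu.2.1 _ himu)
    subst hii'
    set lam' : NCP n := ⟨lam.1.erase (i, j), NCPAux.isNCP_erase lam _⟩ with hlam'
    set mu' : NCP n := ⟨mu.1.erase (i, j), NCPAux.isNCP_erase mu _⟩ with hmu'
    have hcard' : lam'.1.card = m := by
      show (lam.1.erase (i, j)).card = m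
      rw [Finset.card_erase_of_mem hilam, hcard]
      omega
    have hL' : NCP.lpos lam' = NCP.lpos mu' := by
      show (lam.1.erase (i, j)).image Prod.fst = (mu.1.erase (i, j)).image Prod.fst
      rw [NCPAux.lpos_erase lam hilam, NCPAux.lpos_erase mu himu, hL]
    have hR' : NCP.rpos lam' = NCP.rpos mu' := by
      show (lam.1.erase (i, j)).image Prod.snd = (mu.1.erase (i, j)).image Prod.snd
      rw [NCPAux.rpos_erase lam hilam, NCPAux.rpos_erase mu himu, hR]
    have heq := ih lam' mu' hcard' hL' hR'
    have herase : lam.1.erase (i, j) = mu.1.erase (i, j) := congrArg Subtype.val heq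
    apply Subtype.ext
    rw [← Finset.insert_erase hilam, ← Finset.insert_erase himu, herase]

lemma NCPAux.exists_ncp (m : ℕ) : ∀ L R : Finset (Fin n), R.card = m →
    L.card = R.card →
    (∀ k : ℕ, 1 ≤ k → (R.filter (fun i : Fin n => (i : ℕ) < k)).card ≤
        (L.filter (fun i : Fin n => (i : ℕ) + 1 < k)).card) →
    ∃ lam : NCP n, NCP.lpos lam = L ∧ NCP.rpos lam = R := by
  induction m with
  | zero =>
    intro L R hR hLR _
    have hRe : R = ∅ := Finset.card_eq_zero.mp hR
    have hLe : L = ∅ := Finset.card_eq_zero.mp (by omega)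
    refine ⟨⟨∅, ?_⟩, ?_, ?_⟩
    · exact ⟨fun p hp => absurd hp (Finset.notMem_empty p),
        fun p hp => absurd hp (Finset.notMem_empty p)⟩
    · simp [NCP.lpos, hLe]
    · simp [NCP.rpos, hRe]
  | succ m ih =>
    intro L R hR hLR hbal
    have hRne : R.Nonempty := Finset.card_pos.mp (by omega)
    set j := R.min' hRne with hjdef
    have hjR : j ∈ R := R.min'_mem hRne
    have hjmin : ∀ r ∈ R, j ≤ r := fun r hr => R.min'_le r hr
    have hLflt : (L.filter (fun a : Fin n => a < j)).Nonempty := by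
      have h1 := hbal ((j : ℕ) + 1) (by omega)
      have hjin : j ∈ R.filter (fun i : Fin n => (i : ℕ) < (j : ℕ) + 1) :=
        Finset.mem_filter.mpr ⟨hjR, by omega⟩
      have h2 : 0 < (L.filter (fun i : Fin n => (i : ℕ) + 1 < (j : ℕ) + 1)).card :=
        lt_of_lt_of_le (Finset.card_pos.mpr ⟨j, hjin⟩) h1
      obtain ⟨a, ha⟩ := Finset.card_pos.mp h2
      obtain ⟨haL, hak⟩ := Finset.mem_filter.mp ha
      exact ⟨a, Finset.mem_filter.mpr ⟨haL, Fin.lt_def.mpr (by omega)⟩⟩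
    set i := (L.filter (fun a : Fin n => a < j)).max' hLflt with hidef
    have hiL : i ∈ L ∧ i < j :=
      Finset.mem_filter.mp ((L.filter (fun a : Fin n => a < j)).max'_mem hLflt)
    have himax : ∀ a ∈ L, a < j → a ≤ i := fun a haL haj =>
      Finset.le_max' (L.filter (fun a : Fin n => a < j)) a (Finset.mem_filter.mpr ⟨haL, haj⟩)
    have hR' : (R.erase j).card = m := by
      rw [Finset.card_erase_of_mem hjR, hR]
      omega
    have hL' : (L.erase i).card = (R.erase j).card := by
      rw [Finset.card_erase_of_mem hiL.1, Finset.card_erase_of_mem hjR, hLR]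
    have hbal' : ∀ k : ℕ, 1 ≤ k →
        ((R.erase j).filter (fun i : Fin n => (i : ℕ) < k)).card ≤
          ((L.erase i).filter (fun a : Fin n => (a : ℕ) + 1 < k)).card := by
      intro k hk
      by_cases hkj : (j : ℕ) < k
      · rw [Finset.filter_erase, Finset.filter_erase,
          Finset.card_erase_of_mem (Finset.mem_filter.mpr ⟨hjR, hkj⟩),
          Finset.card_erase_of_mem (Finset.mem_filter.mpr
            ⟨hiL.1, by have := Fin.lt_def.mp hiL.2; omega⟩)]
        exact Nat.sub_le_sub_right (hbal k hk) 1
      · have hempty : (R.erase j).filter (fun i : Fin n => (i : ℕ) < k) = ∅ := by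
          apply Finset.filter_eq_empty_iff.mpr
          intro r hr hrk
          have h3 := Fin.le_def.mp (hjmin r (Finset.mem_of_mem_erase hr))
          omega
        simp [hempty]
    obtain ⟨lam', hl', hr'⟩ := ih (L.erase i) (R.erase j) hR' hL' hbal'
    have hnotmem : (i, j) ∉ lam'.1 := by
      intro hm
      have h := Finset.mem_image_of_mem Prod.fst hm
      rw [show lam'.1.image Prod.fst = NCP.lpos lam' from rfl, hl'] at h
      exact (Finset.mem_erase.mp h).1 rfl
    have hA : IsNCP n (insert (i, j) lam'.1) := by
      constructor
      · intro p hp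
        rcases Finset.mem_insert.mp hp with h | h
        · rw [h]; exact hiL.2
        · exact lam'.2.1 p h
      · intro p hp q hq hpq
        rcases Finset.mem_insert.mp hp with hp' | hp' <;>
          rcases Finset.mem_insert.mp hq with hq' | hq'
        · exact absurd (hp'.trans hq'.symm) hpq
        · subst hp'
          rintro ⟨h1, h2, h3⟩
          have hq1 : q.1 ∈ NCP.lpos lam' := Finset.mem_image_of_mem Prod.fst hq'
          rw [hl'] at hq1
          obtain ⟨hq1ne, hq1L⟩ := Finset.mem_erase.mp hq1
          exact hq1ne (le_antisymm (himax q.1 hq1L h2) h1)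
        · subst hq'
          rintro ⟨h1, h2, h3⟩
          have hp2 : p.2 ∈ NCP.rpos lam' := Finset.mem_image_of_mem Prod.snd hp'
          rw [hr'] at hp2
          obtain ⟨hne2, hR2⟩ := Finset.mem_erase.mp hp2
          exact hne2 (le_antisymm h3 (hjmin p.2 hR2))
        · exact lam'.2.2 p hp' q hq' hpq
    refine ⟨⟨insert (i, j) lam'.1, hA⟩, ?_, ?_⟩
    · show (insert (i, j) lam'.1).image Prod.fst = L
      rw [Finset.image_insert]
      rw [show lam'.1.image Prod.fst = NCP.lpos lam' from rfl, hl']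
      exact Finset.insert_erase hiL.1
    · show (insert (i, j) lam'.1).image Prod.snd = R
      rw [Finset.image_insert]
      rw [show lam'.1.image Prod.snd = NCP.rpos lam' from rfl, hr']
      exact Finset.insert_erase hjR

end NCPAux

/-- a noncrossing partition is determined by its sets of left and right
endpoints; and `L`, `R` of equal size satisfy the ballot-type inequalities iff they arise
as `λ⁺`, `λ⁻` of some noncrossing partition.  (1-based: `i : Fin n` has label `i+1`.) -/
theorem stmt0 (n : ℕ) :
    (∀ lam mu : NCP n, NCP.lpos lam = NCP.lpos mu → NCP.rpos lam = NCP.rpos mu →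
      lam = mu) ∧
    (∀ L R : Finset (Fin n), L.card = R.card →
      ((∀ k : ℕ, 1 ≤ k →
          (R.filter (fun i => (i : ℕ) < k)).card ≤
            (L.filter (fun i => (i : ℕ) + 1 < k)).card) ↔
        ∃ lam : NCP n, NCP.lpos lam = L ∧ NCP.rpos lam = R)) := by
  constructor
  · intro lam mu hL hR
    exact NCPAux.ncp_unique lam.1.card lam mu rfl hL hR
  · intro L R hcard
    simp only [Finset.bind_def, Finset.pure_def, Finset.sup_singleton_apply, Finset.filter_image,
      Finset.card_image_of_injective, Fin.val_injective]
    constructor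
    · intro hbal
      exact NCPAux.exists_ncp R.card L R rfl hcard hbal
    · rintro ⟨lam, rfl, rfl⟩ k hk
      exact NCPAux.ballot_of_ncp lam k
end
end

section
/- Let λ be a noncrossing partition of size n whose connected components (as a graph on {1,…,n}) are C_1,…,C_s, and enumerate each component in increasing order as C_r = {c_{r,1} < c_{r,2} < ⋯ < c_{r,|C_r|}}. Then Q_λ is the product of the disjoint cycles (c_{r,|C_r|} ⋯ c_{r,2} c_{r,1}) for 1 ≤ r ≤ s; equivalently, Q_λ(c_{r,1}) = c_{r,|C_r|} and Q_λ(c_{r,i}) = c_{r,i−1} for all 1 < i ≤ |C_r|. -/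
open scoped Classical

noncomputable section

open MvPolynomial

namespace NCP

lemma arc_lt' {n : ℕ} {lam : NCP n} {i j : Fin n} (h : (i, j) ∈ lam.1) : i < j :=
  lam.2.1 _ h

lemma right_unique' {n : ℕ} {lam : NCP n} {i i' j : Fin n}
    (h : (i, j) ∈ lam.1) (h' : (i', j) ∈ lam.1) : i = i' := by
  by_contra hne
  rcases lt_or_gt_of_ne hne with hlt | hlt
  · exact lam.2.2 _ h _ h' (fun e => hne (congrArg Prod.fst e))
      ⟨le_of_lt hlt, arc_lt' h', le_refl _⟩
  · exact lam.2.2 _ h' _ h (fun e => hne (congrArg Prod.fst e).symm)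
      ⟨le_of_lt hlt, arc_lt' h, le_refl _⟩

lemma left_unique' {n : ℕ} {lam : NCP n} {i j j' : Fin n}
    (h : (i, j) ∈ lam.1) (h' : (i, j') ∈ lam.1) : j = j' := by
  by_contra hne
  rcases lt_or_gt_of_ne hne with hlt | hlt
  · exact lam.2.2 _ h _ h' (fun e => hne (congrArg Prod.snd e))
      ⟨le_refl _, arc_lt' h, le_of_lt hlt⟩
  · exact lam.2.2 _ h' _ h (fun e => hne (congrArg Prod.snd e).symm)
      ⟨le_refl _, arc_lt' h', le_of_lt hlt⟩

lemma fwd_le' {n : ℕ} {lam : NCP n} {a b : Fin n}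
    (h : Relation.ReflTransGen (fun x y => (x, y) ∈ lam.1) a b) : a ≤ b := by
  induction h with
  | refl => exact le_refl _
  | tail _ h2 ih => exact ih.trans (le_of_lt (arc_lt' h2))

lemma conn_dichotomy' {n : ℕ} {lam : NCP n} {a b : Fin n} (h : Connected lam a b) :
    Relation.ReflTransGen (fun x y => (x, y) ∈ lam.1) a b ∨
    Relation.ReflTransGen (fun x y => (x, y) ∈ lam.1) b a := by
  induction h with
  | refl => exact Or.inl .refl
  | @tail c b _ h2 ih =>
    rcases h2 with h2 | h2
    · rcases ih with ih | ih
      · exact Or.inl (ih.tail h2)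
      · rcases ih.cases_head with rfl | ⟨d, hd, hda⟩
        · exact Or.inl (Relation.ReflTransGen.single h2)
        · have : b = d := left_unique' h2 hd
          subst this; exact Or.inr hda
    · rcases ih with ih | ih
      · rcases ih.cases_tail with rfl | ⟨d, had, hd⟩
        · exact Or.inr (Relation.ReflTransGen.single h2)
        · have : b = d := right_unique' h2 hd
          subst this; exact Or.inl had
      · exact Or.inr (.head h2 ih)

lemma descent' {n : ℕ} {lam : NCP n} {j i : Fin n} (hc : Connected lam j i) (hij : i < j) :
    ∃ c, (c, j) ∈ lam.1 ∧ i ≤ c := by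
  rcases conn_dichotomy' hc with h | h
  · exact absurd (fwd_le' h) (not_le.mpr hij)
  · rcases h.cases_tail with heq | ⟨d, hid, hd⟩
    · exact absurd heq.symm hij.ne
    · exact ⟨d, hd, fwd_le' hid⟩

end NCP

/-- the disjoint cycle decomposition of `Q_λ`: `Q_λ` sends the minimum of
each connected component to its maximum and every other element `j` of a component to its
predecessor in the component (the largest element of the component smaller than `j`). -/
theorem stmt1 (n : ℕ) (lam : NCP n) (Q : Equiv.Perm (Fin n)) (hQ : NCP.IsQ lam Q) :
    ∀ j : Fin n,
      ((∀ i ∈ NCP.component lam j, j ≤ i) →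
        Q j = (NCP.component lam j).max' ⟨j, NCP.mem_component_self lam j⟩) ∧
      ((∃ i ∈ NCP.component lam j, i < j) →
        Q j ∈ NCP.component lam j ∧ Q j < j ∧
          ∀ i ∈ NCP.component lam j, i < j → i ≤ Q j) := by
  intro j
  constructor
  · intro hmin
    have hne : ¬ ∃ i, (i, j) ∈ lam.1 := by
      rintro ⟨i, hi⟩
      have hic : i ∈ NCP.component lam j :=
        Finset.mem_filter.mpr ⟨Finset.mem_univ _,
          Relation.ReflTransGen.single (Or.inr hi)⟩
      exact absurd (NCP.arc_lt' hi) (not_lt.mpr (hmin i hic))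
    rw [hQ j]
    unfold NCP.Qfun
    rw [dif_neg hne]
    rfl
  · rintro ⟨i, hi, hij⟩
    have hconn : NCP.Connected lam j i := (Finset.mem_filter.mp hi).2
    obtain ⟨c, hcj, _⟩ := NCP.descent' hconn hij
    have hex : ∃ i, (i, j) ∈ lam.1 := ⟨c, hcj⟩
    have hQj : (Q j, j) ∈ lam.1 := by
      rw [hQ j]
      unfold NCP.Qfun
      rw [dif_pos hex]
      exact hex.choose_spec
    refine ⟨Finset.mem_filter.mpr ⟨Finset.mem_univ _,
      Relation.ReflTransGen.single (Or.inr hQj)⟩, NCP.arc_lt' hQj, ?_⟩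
    intro k hk hkj
    obtain ⟨c', hc'j, hkc'⟩ := NCP.descent' (Finset.mem_filter.mp hk).2 hkj
    have h := NCP.right_unique' hc'j hQj
    exact h ▸ hkc'
end
end

section
/- Let λ and μ be noncrossing partitions of size n. Then λ ⪯ μ if and only if for all 1 ≤ k ≤ n both |λ⁺ ∩ {1,…,k−1}| − |λ⁻ ∩ {1,…,k}| ≤ |μ⁺ ∩ {1,…,k−1}| − |μ⁻ ∩ {1,…,k}| and |λ⁺ ∩ {1,…,k}| − |λ⁻ ∩ {1,…,k}| ≤ |μ⁺ ∩ {1,…,k}| − |μ⁻ ∩ {1,…,k}| (differences taken in ℤ). -/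
open scoped Classical

noncomputable section

open MvPolynomial

namespace NCPwork
open Finset

variable {n : ℕ}

lemma fst_inj (lam : NCP n) {p q : Fin n × Fin n} (hp : p ∈ lam.1) (hq : q ∈ lam.1)
    (h : p.1 = q.1) : p = q := by
  by_contra hne
  have h1 := lam.2.1 p hp
  have h2 := lam.2.1 q hq
  rcases le_or_gt p.2 q.2 with hle | hlt
  · exact lam.2.2 p hp q hq hne ⟨le_of_eq h, h ▸ h1, hle⟩
  · exact lam.2.2 q hq p hp (Ne.symm hne) ⟨le_of_eq h.symm, h ▸ h2, le_of_lt hlt⟩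

lemma snd_inj (lam : NCP n) {p q : Fin n × Fin n} (hp : p ∈ lam.1) (hq : q ∈ lam.1)
    (h : p.2 = q.2) : p = q := by
  by_contra hne
  have h1 := lam.2.1 p hp
  have h2 := lam.2.1 q hq
  rcases le_or_gt p.1 q.1 with hle | hlt
  · exact lam.2.2 p hp q hq hne ⟨hle, h ▸ h2, le_of_eq h⟩
  · exact lam.2.2 q hq p hp (Ne.symm hne) ⟨le_of_lt hlt, h ▸ h1, le_of_eq h.symm⟩

/-- number of arcs with left endpoint < k -/
def aL (lam : NCP n) (k : ℕ) : ℕ := (lam.1.filter (fun p => (p.1 : ℕ) < k)).card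
/-- number of arcs with right endpoint < k -/
def aR (lam : NCP n) (k : ℕ) : ℕ := (lam.1.filter (fun p => (p.2 : ℕ) < k)).card
def aU (lam : NCP n) (k : ℕ) : ℤ := (aL lam (k-1) : ℤ) - (aR lam k : ℤ)
def aV (lam : NCP n) (k : ℕ) : ℤ := (aL lam k : ℤ) - (aR lam k : ℤ)

lemma card_lpos_filter (lam : NCP n) (Q : Fin n → Prop) [DecidablePred Q] :
    ((NCP.lpos lam).filter Q).card = (lam.1.filter (fun p => Q p.1)).card := by
  rw [NCP.lpos, Finset.filter_image]
  apply Finset.card_image_of_injOn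
  intro p hp q hq h
  exact fst_inj lam (Finset.mem_filter.mp hp).1 (Finset.mem_filter.mp hq).1 h

lemma card_rpos_filter (lam : NCP n) (Q : Fin n → Prop) [DecidablePred Q] :
    ((NCP.rpos lam).filter Q).card = (lam.1.filter (fun p => Q p.2)).card := by
  rw [NCP.rpos, Finset.filter_image]
  apply Finset.card_image_of_injOn
  intro p hp q hq h
  exact snd_inj lam (Finset.mem_filter.mp hp).1 (Finset.mem_filter.mp hq).1 h

lemma aL_zero (lam : NCP n) : aL lam 0 = 0 := by
  simp [aL]

lemma aR_le_aL (lam : NCP n) (k : ℕ) : aR lam k ≤ aL lam (k-1) := by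
  apply Finset.card_le_card
  intro p hp
  rw [Finset.mem_filter] at hp ⊢
  refine ⟨hp.1, ?_⟩
  have := lam.2.1 p hp.1
  have h2 := hp.2
  have : (p.1 : ℕ) < (p.2 : ℕ) := this
  omega

lemma aU_nonneg (lam : NCP n) (k : ℕ) : 0 ≤ aU lam k := by
  have := aR_le_aL lam k
  simp only [aU]
  omega

lemma aL_top (lam : NCP n) : aL lam n = lam.1.card := by
  unfold aL
  congr 1
  apply Finset.filter_true_of_mem
  intro p _
  exact p.1.isLt

lemma aR_top (lam : NCP n) : aR lam n = lam.1.card := by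
  unfold aR
  congr 1
  apply Finset.filter_true_of_mem
  intro p _
  exact p.2.isLt

lemma aV_zero (lam : NCP n) : aV lam 0 = 0 := by simp [aV, aL, aR]

lemma aV_top (lam : NCP n) : aV lam n = 0 := by simp [aV, aL_top, aR_top]

lemma aL_succ (lam : NCP n) (k : ℕ) :
    aL lam (k+1) = aL lam k + (lam.1.filter (fun p => (p.1 : ℕ) = k)).card := by
  unfold aL
  rw [← Finset.card_union_of_disjoint]
  · congr 1
    rw [← Finset.filter_or]
    apply Finset.filter_congr
    intro p _
    constructor
    · intro h; omega
    · intro h; omega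
  · rw [Finset.disjoint_filter]
    intro p _ h1 h2
    omega

lemma aR_succ (lam : NCP n) (k : ℕ) :
    aR lam (k+1) = aR lam k + (lam.1.filter (fun p => (p.2 : ℕ) = k)).card := by
  unfold aR
  rw [← Finset.card_union_of_disjoint]
  · congr 1
    rw [← Finset.filter_or]
    apply Finset.filter_congr
    intro p _
    constructor
    · intro h; omega
    · intro h; omega
  · rw [Finset.disjoint_filter]
    intro p _ h1 h2
    omega

lemma card_fst_eq_le_one (lam : NCP n) (k : ℕ) :
    (lam.1.filter (fun p => (p.1 : ℕ) = k)).card ≤ 1 := by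
  apply Finset.card_le_one.mpr
  intro p hp q hq
  rw [Finset.mem_filter] at hp hq
  exact fst_inj lam hp.1 hq.1 (Fin.ext (hp.2.trans hq.2.symm))

lemma card_snd_eq_le_one (lam : NCP n) (k : ℕ) :
    (lam.1.filter (fun p => (p.2 : ℕ) = k)).card ≤ 1 := by
  apply Finset.card_le_one.mpr
  intro p hp q hq
  rw [Finset.mem_filter] at hp hq
  exact snd_inj lam hp.1 hq.1 (Fin.ext (hp.2.trans hq.2.symm))


lemma aR_zero (lam : NCP n) : aR lam 0 = 0 := by simp [aR]

lemma step_down (lam : NCP n) (k : ℕ) :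
    aU lam (k+1) = aV lam k ∨ aU lam (k+1) = aV lam k - 1 := by
  have h := aR_succ lam k
  have h2 := card_snd_eq_le_one lam k
  simp only [aU, aV, Nat.add_sub_cancel]
  omega

lemma step_up (lam : NCP n) (k : ℕ) :
    aV lam (k+1) = aU lam (k+1) ∨ aV lam (k+1) = aU lam (k+1) + 1 := by
  have h := aL_succ lam k
  have h2 := card_fst_eq_le_one lam k
  simp only [aU, aV, Nat.add_sub_cancel]
  omega

/-- The abstract slot-selection lemma for dominance of lattice paths. -/
lemma select (N : ℕ) (f g : ℕ → ℤ)
    (hf0 : f 0 = g 0) (hfN : f N = g N)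
    (hdf : ∀ s, s % 2 = 0 → f (s+1) = f s ∨ f (s+1) = f s - 1)
    (hdg : ∀ s, s % 2 = 0 → g (s+1) = g s ∨ g (s+1) = g s - 1)
    (huf : ∀ s, s % 2 = 1 → f (s+1) = f s ∨ f (s+1) = f s + 1)
    (hug : ∀ s, s % 2 = 1 → g (s+1) = g s ∨ g (s+1) = g s + 1)
    (hdom : ∀ s, s ≤ N → f s ≤ g s)
    (hstrict : ∃ s, s ≤ N ∧ f s < g s) :
    (∃ s, s % 2 = 1 ∧ 1 ≤ s ∧ s < N ∧ f s < g s ∧ g (s-1) = g s ∧ g (s+1) = g s) ∨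
    (∃ s, s % 2 = 0 ∧ 1 ≤ s ∧ s + 1 ≤ N ∧ f s < g s ∧
      g s = g (s-1) + 1 ∧ g (s+1) = g s - 1) := by
  classical
  set S := (Finset.range (N+1)).filter (fun s => f s < g s) with hS
  have hmem : ∀ t, t ∈ S ↔ (t ≤ N ∧ f t < g t) := by
    intro t; simp [hS, Nat.lt_succ_iff, and_comm]
  obtain ⟨s0, hs0⟩ := hstrict
  have hne : S.Nonempty := ⟨s0, (hmem s0).mpr ⟨hs0.1, hs0.2⟩⟩
  obtain ⟨s, hsS, hmax⟩ := S.exists_max_image g hne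
  have hsN : s ≤ N := ((hmem s).mp hsS).1
  have hsf : f s < g s := ((hmem s).mp hsS).2
  have hodd : ∀ t, t % 2 = 1 → t ≤ N → f t < g t → g t = g s →
      t < N ∧ g (t-1) = g t ∧ g (t+1) = g t := by
    intro t ht htN hstr hgt
    have ht1 : 1 ≤ t := by omega
    have htN' : t < N := by
      rcases eq_or_lt_of_le htN with h | h
      · exfalso; rw [h] at hstr; omega
      · exact h
    refine ⟨htN', ?_, ?_⟩
    · have h1 := hdg (t-1) (by omega)
      have h1' : t - 1 + 1 = t := by omega
      rw [h1'] at h1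
      rcases h1 with h | h
      · omega
      · exfalso
        have h2 := hdf (t-1) (by omega); rw [h1'] at h2
        have hft1 : f (t-1) < g (t-1) := by omega
        have := hmax (t-1) ((hmem _).mpr ⟨by omega, hft1⟩)
        omega
    · rcases hug t ht with h | h
      · omega
      · exfalso
        have h2 := huf t ht
        have hft1 : f (t+1) < g (t+1) := by omega
        have := hmax (t+1) ((hmem _).mpr ⟨by omega, hft1⟩)
        omega
  rcases Nat.even_or_odd s with hpar | hpar
  · -- s even
    have hpar' : s % 2 = 0 := Nat.even_iff.mp hpar
    have hs1 : 1 ≤ s := by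
      rcases Nat.eq_zero_or_pos s with h | h
      · exfalso; rw [h] at hsf; omega
      · exact h
    have hs2 : 2 ≤ s := by omega
    have hsN' : s < N := by
      rcases eq_or_lt_of_le hsN with h | h
      · exfalso; rw [h] at hsf; omega
      · exact h
    have h1' : s - 1 + 1 = s := by omega
    have hgl := hug (s-1) (by omega); rw [h1'] at hgl
    rcases hgl with hgl | hgl
    · -- flat on the left: move to s-1 (odd)
      have hfl := huf (s-1) (by omega); rw [h1'] at hfl
      have hstr1 : f (s-1) < g (s-1) := by omega
      obtain ⟨hN1, ha, hb⟩ := hodd (s-1) (by omega) (by omega) hstr1 (by omega)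
      exact Or.inl ⟨s-1, by omega, by omega, hN1, hstr1, ha, hb⟩
    · -- up-step into s; look right
      rcases hdg s hpar' with hgr | hgr
      · -- flat on the right: move to s+1 (odd)
        have hfr := hdf s hpar'
        have hstr1 : f (s+1) < g (s+1) := by omega
        obtain ⟨hN1, ha, hb⟩ := hodd (s+1) (by omega) (by omega) hstr1 (by omega)
        have : s + 1 - 1 = s := by omega
        rw [this] at ha
        exact Or.inl ⟨s+1, by omega, by omega, hN1, hstr1, ha, hb⟩
      · exact Or.inr ⟨s, hpar', hs1, by omega, hsf, by omega, hgr⟩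
  · have hpar' : s % 2 = 1 := Nat.odd_iff.mp hpar
    obtain ⟨hN1, ha, hb⟩ := hodd s hpar' hsN hsf rfl
    exact Or.inl ⟨s, hpar', by omega, hN1, hsf, ha, hb⟩

/-- A noncrossing partition is determined by its sets of left and right endpoints. -/
lemma eq_of_pos_eq (lam mu : NCP n) (hA : NCP.lpos lam = NCP.lpos mu)
    (hB : NCP.rpos lam = NCP.rpos mu) : lam = mu := by
  have claim : ∀ j : ℕ, ∀ p q : Fin n × Fin n,
      ((p ∈ lam.1 ∧ q ∈ mu.1) ∨ (p ∈ mu.1 ∧ q ∈ lam.1)) →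
      (p.2 : ℕ) = j → (q.2 : ℕ) = j → p = q := by
    intro j
    induction j using Nat.strong_induction_on with
    | _ j ih =>
      intro p q hmem hpj hqj
      have hp2q2 : p.2 = q.2 := Fin.ext (by omega)
      have core : ∀ (P Q : NCP n) (x y : Fin n × Fin n), NCP.lpos P = NCP.lpos Q →
          x ∈ P.1 → y ∈ Q.1 → x.2 = y.2 → (x.2 : ℕ) = j →
          (P = lam ∧ Q = mu ∨ P = mu ∧ Q = lam) → x.1 < y.1 → False := by
        intro P Q x y hAPQ hx hy hxy2 hxj hor h1
        have hy1 : y.1 ∈ NCP.lpos Q := Finset.mem_image.mpr ⟨y, hy, rfl⟩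
        rw [← hAPQ] at hy1
        obtain ⟨r, hr, hr1⟩ := Finset.mem_image.mp hy1
        have hrx : r ≠ x := by
          intro h; rw [h] at hr1; exact absurd hr1 (ne_of_lt h1)
        have hr2 : r.2 < x.2 := by
          by_contra hcon
          push_neg at hcon
          refine P.2.2 x hx r hr (Ne.symm hrx) ⟨hr1 ▸ le_of_lt h1, ?_, hcon⟩
          rw [hr1, hxy2]
          exact Q.2.1 y hy
        have hr2' : r.2 ∈ NCP.rpos Q := by
          have hmemP : r.2 ∈ NCP.rpos P := Finset.mem_image.mpr ⟨r, hr, rfl⟩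
          rcases hor with ⟨hP, hQ⟩ | ⟨hP, hQ⟩
          · rw [hP] at hmemP; rw [hQ, ← hB]; exact hmemP
          · rw [hP] at hmemP; rw [hQ, hB]; exact hmemP
        obtain ⟨r', hr', hr'2⟩ := Finset.mem_image.mp hr2'
        have hrr' : r = r' := by
          have hlt : (r.2 : ℕ) < j := by
            have : (r.2 : ℕ) < (x.2 : ℕ) := hr2
            omega
          rcases hor with ⟨hP, hQ⟩ | ⟨hP, hQ⟩
          · exact ih _ hlt r r' (Or.inl ⟨hP ▸ hr, hQ ▸ hr'⟩) rfl (by rw [hr'2])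
          · exact ih _ hlt r r' (Or.inr ⟨hP ▸ hr, hQ ▸ hr'⟩) rfl (by rw [hr'2])
        have hry : r = y := fst_inj Q (hrr' ▸ hr') hy hr1
        rw [hry, hxy2] at hr2
        exact absurd hr2 (lt_irrefl _)
      rcases lt_trichotomy p.1 q.1 with h1 | h1 | h1
      · rcases hmem with ⟨hp, hq⟩ | ⟨hp, hq⟩
        · exact absurd (core lam mu p q hA hp hq hp2q2 hpj (Or.inl ⟨rfl, rfl⟩) h1) id
        · exact absurd (core mu lam p q hA.symm hp hq hp2q2 hpj (Or.inr ⟨rfl, rfl⟩) h1) id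
      · exact Prod.ext h1 hp2q2
      · rcases hmem with ⟨hp, hq⟩ | ⟨hp, hq⟩
        · exact absurd (core mu lam q p hA.symm hq hp hp2q2.symm hqj (Or.inr ⟨rfl, rfl⟩) h1) id
        · exact absurd (core lam mu q p hA hq hp hp2q2.symm hqj (Or.inl ⟨rfl, rfl⟩) h1) id
  apply Subtype.ext
  ext p
  constructor
  · intro hp
    have : p.2 ∈ NCP.rpos mu := by rw [← hB]; exact Finset.mem_image.mpr ⟨p, hp, rfl⟩
    obtain ⟨q, hq, hq2⟩ := Finset.mem_image.mp this
    have := claim (p.2 : ℕ) p q (Or.inl ⟨hp, hq⟩) rfl (by rw [hq2])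
    rw [this]; exact hq
  · intro hp
    have : p.2 ∈ NCP.rpos lam := by rw [hB]; exact Finset.mem_image.mpr ⟨p, hp, rfl⟩
    obtain ⟨q, hq, hq2⟩ := Finset.mem_image.mp this
    have := claim (p.2 : ℕ) p q (Or.inr ⟨hp, hq⟩) rfl (by rw [hq2])
    rw [this]; exact hq


lemma card_filter_erase {α : Type*} [DecidableEq α] (s : Finset α) (c : α) (hc : c ∈ s)
    (P : α → Prop) [DecidablePred P] :
    ((s.erase c).filter P).card + (if P c then 1 else 0) = (s.filter P).card := by
  rw [Finset.filter_erase]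
  split_ifs with h
  · rw [Finset.card_erase_add_one (Finset.mem_filter.mpr ⟨hc, h⟩)]
  · rw [Finset.erase_eq_of_notMem (fun hcon => h (Finset.mem_filter.mp hcon).2), add_zero]

lemma card_filter_cov2 {α : Type*} [DecidableEq α] (s : Finset α) (a b c : α) (hc : c ∈ s)
    (ha : a ∉ s) (hb : b ∉ s) (hab : a ≠ b) (P : α → Prop) [DecidablePred P] :
    ((insert a (insert b (s.erase c))).filter P).card + (if P c then 1 else 0)
      = (s.filter P).card + (if P a then 1 else 0) + (if P b then 1 else 0) := by
  have hbe : b ∉ (s.erase c).filter P := by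
    intro h; exact hb (Finset.mem_of_mem_erase (Finset.mem_filter.mp h).1)
  have hae : a ∉ (insert b (s.erase c)).filter P := by
    intro h
    rcases Finset.mem_insert.mp (Finset.mem_filter.mp h).1 with h' | h'
    · exact hab h'
    · exact ha (Finset.mem_of_mem_erase h')
  have h1 := card_filter_erase s c hc P
  rw [Finset.filter_insert]
  by_cases hPa : P a
  · rw [if_pos hPa, Finset.card_insert_of_notMem hae, Finset.filter_insert]
    by_cases hPb : P b
    · rw [if_pos hPb, Finset.card_insert_of_notMem hbe]
      simp only [if_pos hPa, if_pos hPb]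
      omega
    · rw [if_neg hPb]
      simp only [if_pos hPa, if_neg hPb]
      omega
  · rw [if_neg hPa, Finset.filter_insert]
    by_cases hPb : P b
    · rw [if_pos hPb, Finset.card_insert_of_notMem hbe]
      simp only [if_neg hPa, if_pos hPb]
      omega
    · rw [if_neg hPb]
      simp only [if_neg hPa, if_neg hPb]
      omega

lemma cover_heights (lam mu : NCP n) (h : NCPCovBy lam mu) :
    ∀ k, aU lam k ≤ aU mu k ∧ aV lam k ≤ aV mu k := by
  rcases h with ⟨i, j, hji, hmem, heq⟩ | ⟨i, j, k0, hij, hjk, hmem, heq⟩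
  · have hL : ∀ m, (aL lam m : ℤ) + (if (i : ℕ) < m then 1 else 0) = aL mu m := by
      intro m
      have := card_filter_erase mu.1 (i, j) hmem (fun p => (p.1 : ℕ) < m)
      unfold aL
      rw [heq]
      exact_mod_cast this
    have hR : ∀ m, (aR lam m : ℤ) + (if (j : ℕ) < m then 1 else 0) = aR mu m := by
      intro m
      have := card_filter_erase mu.1 (i, j) hmem (fun p => (p.2 : ℕ) < m)
      unfold aR
      rw [heq]
      exact_mod_cast this
    intro k
    have h1 := hL (k-1)
    have h2 := hL k
    have h3 := hR k
    unfold aU aV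
    constructor <;> [skip; skip] <;>
      · split_ifs at h1 h2 h3 <;> omega
  · have hne1 : ((i, j) : Fin n × Fin n) ≠ (j, k0) := by
      intro h; exact absurd (congrArg Prod.fst h) (ne_of_lt hij)
    have hnm1 : ((i, j) : Fin n × Fin n) ∉ mu.1 := by
      intro h
      have := fst_inj mu h hmem rfl
      exact absurd (congrArg Prod.snd this) (ne_of_lt hjk)
    have hnm2 : ((j, k0) : Fin n × Fin n) ∉ mu.1 := by
      intro h
      have := snd_inj mu h hmem rfl
      exact absurd (congrArg Prod.fst this).symm (ne_of_lt hij)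
    have hL : ∀ m, (aL lam m : ℤ) = aL mu m + (if (j : ℕ) < m then 1 else 0) := by
      intro m
      have := card_filter_cov2 mu.1 (i, j) (j, k0) (i, k0) hmem hnm1 hnm2 hne1
        (fun p => (p.1 : ℕ) < m)
      unfold aL
      rw [heq]
      split_ifs at this ⊢ <;> push_cast <;> omega
    have hR : ∀ m, (aR lam m : ℤ) = aR mu m + (if (j : ℕ) < m then 1 else 0) := by
      intro m
      have := card_filter_cov2 mu.1 (i, j) (j, k0) (i, k0) hmem hnm1 hnm2 hne1
        (fun p => (p.2 : ℕ) < m)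
      unfold aR
      rw [heq]
      split_ifs at this ⊢ <;> push_cast <;> omega
    intro k
    have h1 := hL (k-1)
    have h2 := hL k
    have h3 := hR k
    unfold aU aV
    constructor <;>
      · split_ifs at h1 h2 h3 <;> omega

lemma forward_heights (lam mu : NCP n) (h : NCPle lam mu) :
    ∀ k, aU lam k ≤ aU mu k ∧ aV lam k ≤ aV mu k := by
  induction h with
  | refl => intro k; exact ⟨le_rfl, le_rfl⟩
  | tail _ hbc ih =>
    intro k
    have h2 := cover_heights _ _ hbc k
    exact ⟨le_trans (ih k).1 h2.1, le_trans (ih k).2 h2.2⟩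

lemma eq_of_heights (lam mu : NCP n)
    (h : ∀ k, 1 ≤ k → k ≤ n → aU lam k = aU mu k ∧ aV lam k = aV mu k) : lam = mu := by
  have hLR : ∀ k, k ≤ n → aL lam k = aL mu k ∧ aR lam k = aR mu k := by
    intro k
    induction k with
    | zero => intro _; simp [aL_zero, aR_zero]
    | succ k ihk =>
      intro hk
      obtain ⟨hL, hR⟩ := ihk (by omega)
      obtain ⟨hU, hV⟩ := h (k+1) (by omega) hk
      simp only [aU, aV, Nat.add_sub_cancel] at hU hV
      omega
  have hfst : ∀ m : ℕ, m < n →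
      (lam.1.filter (fun p => (p.1 : ℕ) = m)).card
        = (mu.1.filter (fun p => (p.1 : ℕ) = m)).card := by
    intro m hm
    have h1 := aL_succ lam m
    have h2 := aL_succ mu m
    have h3 := hLR m (by omega)
    have h4 := hLR (m+1) (by omega)
    omega
  have hsnd : ∀ m : ℕ, m < n →
      (lam.1.filter (fun p => (p.2 : ℕ) = m)).card
        = (mu.1.filter (fun p => (p.2 : ℕ) = m)).card := by
    intro m hm
    have h1 := aR_succ lam m
    have h2 := aR_succ mu m
    have h3 := hLR m (by omega)
    have h4 := hLR (m+1) (by omega)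
    omega
  apply eq_of_pos_eq
  · ext a
    have hiff : ∀ (nu : NCP n), a ∈ NCP.lpos nu ↔
        0 < (nu.1.filter (fun p => (p.1 : ℕ) = (a : ℕ))).card := by
      intro nu
      rw [Finset.card_pos]
      constructor
      · intro hmem
        obtain ⟨p, hp, hp1⟩ := Finset.mem_image.mp hmem
        exact ⟨p, Finset.mem_filter.mpr ⟨hp, by rw [hp1]⟩⟩
      · intro ⟨p, hp⟩
        obtain ⟨hp1, hp2⟩ := Finset.mem_filter.mp hp
        exact Finset.mem_image.mpr ⟨p, hp1, Fin.ext hp2⟩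
    rw [hiff lam, hiff mu, hfst (a : ℕ) a.isLt]
  · ext a
    have hiff : ∀ (nu : NCP n), a ∈ NCP.rpos nu ↔
        0 < (nu.1.filter (fun p => (p.2 : ℕ) = (a : ℕ))).card := by
      intro nu
      rw [Finset.card_pos]
      constructor
      · intro hmem
        obtain ⟨p, hp, hp1⟩ := Finset.mem_image.mp hmem
        exact ⟨p, Finset.mem_filter.mpr ⟨hp, by rw [hp1]⟩⟩
      · intro ⟨p, hp⟩
        obtain ⟨hp1, hp2⟩ := Finset.mem_filter.mp hp
        exact Finset.mem_image.mpr ⟨p, hp1, Fin.ext hp2⟩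
    rw [hiff lam, hiff mu, hsnd (a : ℕ) a.isLt]


lemma isNCP_subset {A B : Finset (Fin n × Fin n)} (hsub : A ⊆ B) (h : IsNCP n B) :
    IsNCP n A :=
  ⟨fun p hp => h.1 p (hsub hp), fun p hp q hq => h.2 p (hsub hp) q (hsub hq)⟩

/-- B1 : lower a strict peak at an even slot by removing a short arc. -/
lemma exists_peak_cover (mu : NCP n) (k : ℕ) (hk1 : 1 ≤ k) (hkn : k + 1 ≤ n)
    (hup : aV mu k = aU mu k + 1) (hdn : aU mu (k+1) = aV mu k - 1) :
    ∃ nu : NCP n, NCPCovBy nu mu ∧ (∀ m, aU nu m = aU mu m) ∧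
      (∀ m, aV nu m = aV mu m - (if m = k then 1 else 0)) := by
  -- produce the arc (k-1, k)
  have hL := aL_succ mu (k-1)
  have hR := aR_succ mu k
  have hk' : k - 1 + 1 = k := by omega
  rw [hk'] at hL
  have hcf : 0 < (mu.1.filter (fun p => (p.1 : ℕ) = k-1)).card := by
    simp only [aU, aV] at hup
    omega
  have hcs : 0 < (mu.1.filter (fun p => (p.2 : ℕ) = k)).card := by
    simp only [aU, aV, Nat.add_sub_cancel] at hdn
    omega
  obtain ⟨p, hp⟩ := Finset.card_pos.mp hcf
  obtain ⟨q, hq⟩ := Finset.card_pos.mp hcs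
  obtain ⟨hpmu, hp1⟩ := Finset.mem_filter.mp hp
  obtain ⟨hqmu, hq2⟩ := Finset.mem_filter.mp hq
  have hpq : p = q := by
    by_contra hne
    have hqlt := mu.2.1 q hqmu
    have hplt := mu.2.1 p hpmu
    have hqlt' : (q.1 : ℕ) < (q.2 : ℕ) := hqlt
    have hplt' : (p.1 : ℕ) < (p.2 : ℕ) := hplt
    have h2 : p.2 < q.2 := by
      by_contra hcon
      push_neg at hcon
      exact mu.2.2 q hqmu p hpmu (Ne.symm hne)
        ⟨by rw [Fin.le_def]; omega, by rw [Fin.lt_def]; omega, hcon⟩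
    rw [Fin.lt_def] at h2
    omega
  subst hpq
  have hp2 : (p.2 : ℕ) = k := hq2
  -- nu = mu minus the arc p = (k-1, k)
  refine ⟨⟨mu.1.erase p, isNCP_subset (Finset.erase_subset _ _) mu.2⟩, ?_, ?_, ?_⟩
  · left
    exact ⟨p.1, p.2, by omega, by rw [Prod.mk.eta]; exact hpmu, by rw [Prod.mk.eta]⟩
  · intro m
    have h1 := card_filter_erase mu.1 p hpmu (fun r => (r.1 : ℕ) < m - 1)
    have h3 := card_filter_erase mu.1 p hpmu (fun r => (r.2 : ℕ) < m)
    simp only [hp1, hp2] at h1 h3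
    simp only [aU, aL, aR]
    split_ifs at h1 h3 <;> omega
  · intro m
    have h2 := card_filter_erase mu.1 p hpmu (fun r => (r.1 : ℕ) < m)
    have h3 := card_filter_erase mu.1 p hpmu (fun r => (r.2 : ℕ) < m)
    simp only [hp1, hp2] at h2 h3
    simp only [aV, aL, aR]
    split_ifs at h2 h3 <;> split_ifs <;> omega

/-- B2 : lower a doubly-flat odd slot by splitting the innermost spanning arc. -/
lemma exists_split_cover (mu : NCP n) (k : ℕ) (hk1 : 1 ≤ k) (hkn : k ≤ n)
    (hflat1 : aV mu k = aU mu k) (hflat0 : aV mu (k-1) = aU mu k) (hpos : 1 ≤ aU mu k) :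
    ∃ nu : NCP n, NCPCovBy nu mu ∧ (∀ m, aU nu m = aU mu m - (if m = k then 1 else 0)) ∧
      (∀ m, aV nu m = aV mu m) := by
  have hk' : k - 1 + 1 = k := by omega
  -- no arc has left endpoint k-1
  have hnofst : ∀ r ∈ mu.1, (r.1 : ℕ) ≠ k - 1 := by
    have hL := aL_succ mu (k-1)
    rw [hk'] at hL
    have : (mu.1.filter (fun p => (p.1 : ℕ) = k-1)).card = 0 := by
      simp only [aU, aV] at hflat1
      omega
    intro r hr hcon
    have : r ∈ mu.1.filter (fun p => (p.1 : ℕ) = k-1) := Finset.mem_filter.mpr ⟨hr, hcon⟩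
    rw [Finset.card_eq_zero] at *
    simp_all
    exact this r.1 r.2 hr hcon
  -- no arc has right endpoint k-1
  have hnosnd : ∀ r ∈ mu.1, (r.2 : ℕ) ≠ k - 1 := by
    have hR := aR_succ mu (k-1)
    rw [hk'] at hR
    have : (mu.1.filter (fun p => (p.2 : ℕ) = k-1)).card = 0 := by
      simp only [aU, aV] at hflat0
      omega
    intro r hr hcon
    have : r ∈ mu.1.filter (fun p => (p.2 : ℕ) = k-1) := Finset.mem_filter.mpr ⟨hr, hcon⟩
    rw [Finset.card_eq_zero] at *
    simp_all
    exact this r.1 r.2 hr hcon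
  -- there is an arc spanning k-1
  have hsub : mu.1.filter (fun p => (p.2 : ℕ) < k) ⊆ mu.1.filter (fun p => (p.1 : ℕ) < k-1) := by
    intro p hp
    obtain ⟨hp1, hp2⟩ := Finset.mem_filter.mp hp
    refine Finset.mem_filter.mpr ⟨hp1, ?_⟩
    have : (p.1 : ℕ) < (p.2 : ℕ) := mu.2.1 p hp1
    omega
  have hSpne : (mu.1.filter (fun p => (p.1 : ℕ) < k-1 ∧ k-1 < (p.2 : ℕ))).Nonempty := by
    have hcard : (mu.1.filter (fun p => (p.2 : ℕ) < k)).card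
        < (mu.1.filter (fun p => (p.1 : ℕ) < k-1)).card := by
      simp only [aU, aL, aR] at hpos
      omega
    have hd : ((mu.1.filter (fun p => (p.1 : ℕ) < k-1)) \
        (mu.1.filter (fun p => (p.2 : ℕ) < k))).Nonempty := by
      rw [← Finset.card_pos, Finset.card_sdiff_of_subset hsub]
      omega
    obtain ⟨p, hp⟩ := hd
    rw [Finset.mem_sdiff] at hp
    obtain ⟨hpB, hpA⟩ := hp
    obtain ⟨hpmu, hp1⟩ := Finset.mem_filter.mp hpB
    have hp2 : ¬ (p.2 : ℕ) < k := by
      intro hcon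
      exact hpA (Finset.mem_filter.mpr ⟨hpmu, hcon⟩)
    exact ⟨p, Finset.mem_filter.mpr ⟨hpmu, hp1, by omega⟩⟩
  obtain ⟨p0, hp0S, hmax0⟩ :=
    (mu.1.filter (fun p => (p.1 : ℕ) < k-1 ∧ k-1 < (p.2 : ℕ))).exists_max_image
      (fun p => (p.1 : ℕ)) hSpne
  obtain ⟨hp0mu, hi0, hk0⟩ : p0 ∈ mu.1 ∧ (p0.1 : ℕ) < k-1 ∧ k-1 < (p0.2 : ℕ) := by
    have := Finset.mem_filter.mp hp0S
    exact ⟨this.1, this.2.1, this.2.2⟩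
  have hmax : ∀ r ∈ mu.1, (r.1 : ℕ) < k-1 → k-1 < (r.2 : ℕ) → (r.1 : ℕ) ≤ (p0.1 : ℕ) := by
    intro r hr h1 h2
    exact hmax0 r (Finset.mem_filter.mpr ⟨hr, h1, h2⟩)
  have hkn' : k - 1 < n := by omega
  obtain ⟨j, hjval⟩ : ∃ j : Fin n, (j : ℕ) = k - 1 := ⟨⟨k-1, hkn'⟩, rfl⟩
  have hij : p0.1 < j := by rw [Fin.lt_def, hjval]; exact hi0
  have hjk : j < p0.2 := by rw [Fin.lt_def, hjval]; exact hk0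
  have hnm1 : ((p0.1, j) : Fin n × Fin n) ∉ mu.1 := fun h => hnosnd (p0.1, j) h hjval
  have hnm2 : ((j, p0.2) : Fin n × Fin n) ∉ mu.1 := fun h => hnofst (j, p0.2) h hjval
  have hne1 : ((p0.1, j) : Fin n × Fin n) ≠ (j, p0.2) := by
    intro h
    exact absurd (congrArg Prod.fst h) (ne_of_lt hij)
  have hp0eta : ((p0.1, p0.2) : Fin n × Fin n) = p0 := Prod.mk.eta
  have hnu : IsNCP n (insert (p0.1, j) (insert (j, p0.2) (mu.1.erase p0))) := by
    have hmemchar : ∀ p : Fin n × Fin n,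
        p ∈ insert (p0.1, j) (insert (j, p0.2) (mu.1.erase p0)) ↔
        p = (p0.1, j) ∨ p = (j, p0.2) ∨ (p ≠ p0 ∧ p ∈ mu.1) := by
      intro p
      simp [Finset.mem_insert, Finset.mem_erase]
    constructor
    · intro p hp
      rcases (hmemchar p).mp hp with rfl | rfl | ⟨_, hpmu⟩
      · exact hij
      · exact hjk
      · exact mu.2.1 p hpmu
    · intro p hp q hq hne
      rcases (hmemchar p).mp hp with rfl | rfl | ⟨hpne, hpmu⟩ <;>
        rcases (hmemchar q).mp hq with rfl | rfl | ⟨hqne, hqmu⟩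
      · exact absurd rfl hne
      · rintro ⟨-, h2, -⟩
        dsimp only at h2
        exact absurd h2 (lt_irrefl j)
      · -- p = (p0.1, j), q = r ∈ mu
        rintro ⟨h1, h2, h3⟩
        dsimp only at h1 h2 h3
        rw [Fin.le_def] at h1 h3
        rw [Fin.lt_def] at h2
        rw [hjval] at h2 h3
        have hq2ne : (q.2 : ℕ) ≠ k - 1 := hnosnd q hqmu
        have hqsp := hmax q hqmu (by omega) (by omega)
        have hq1i : q.1 = p0.1 := Fin.ext (by omega)
        exact hqne (fst_inj mu hqmu hp0mu hq1i)
      · rintro ⟨h1, -, -⟩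
        dsimp only at h1
        exact absurd h1 (not_le_of_gt hij)
      · exact absurd rfl hne
      · -- p = (j, p0.2), q = r ∈ mu
        rintro ⟨h1, h2, h3⟩
        dsimp only at h1 h2 h3
        rw [Fin.le_def, hjval] at h1
        have hq1ne : (q.1 : ℕ) ≠ k - 1 := hnofst q hqmu
        have hqnep0 : q ≠ p0 := by
          intro h
          rw [h] at h1
          omega
        refine mu.2.2 p0 hp0mu q hqmu (Ne.symm hqnep0) ⟨?_, h2, h3⟩
        rw [Fin.le_def]
        omega
      · -- p = r ∈ mu, q = (p0.1, j)
        rintro ⟨h1, h2, h3⟩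
        dsimp only at h1 h2 h3
        rw [Fin.le_def, hjval] at h3
        have hp2ne : (p.2 : ℕ) ≠ k - 1 := hnosnd p hpmu
        refine mu.2.2 p hpmu p0 hp0mu hpne ⟨h1, h2, ?_⟩
        rw [Fin.le_def]
        have : k - 1 < (p0.2 : ℕ) := hk0
        omega
      · -- p = r ∈ mu, q = (j, p0.2)
        rintro ⟨h1, h2, h3⟩
        dsimp only at h1 h2 h3
        rw [Fin.le_def, hjval] at h1
        rw [Fin.lt_def, hjval] at h2
        have hp1ne : (p.1 : ℕ) ≠ k - 1 := hnofst p hpmu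
        have hpsp := hmax p hpmu (by omega) (by omega)
        have hp1ne' : (p.1 : ℕ) ≠ (p0.1 : ℕ) := by
          intro h
          exact hpne (fst_inj mu hpmu hp0mu (Fin.ext h))
        refine mu.2.2 p hpmu p0 hp0mu hpne ⟨by rw [Fin.le_def]; omega, ?_, h3⟩
        rw [Fin.lt_def]
        omega
      · exact mu.2.2 p hpmu q hqmu hne
  refine ⟨⟨insert (p0.1, j) (insert (j, p0.2) (mu.1.erase p0)), hnu⟩, ?_, ?_, ?_⟩
  · right
    refine ⟨p0.1, j, p0.2, hij, hjk, hp0eta ▸ hp0mu, ?_⟩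
    rw [hp0eta]
  · intro m
    have h1 := card_filter_cov2 mu.1 (p0.1, j) (j, p0.2) p0 hp0mu hnm1 hnm2 hne1
      (fun r => (r.1 : ℕ) < m - 1)
    have h3 := card_filter_cov2 mu.1 (p0.1, j) (j, p0.2) p0 hp0mu hnm1 hnm2 hne1
      (fun r => (r.2 : ℕ) < m)
    simp only [aU, aL, aR]
    dsimp only at h1 h3
    rw [hjval] at h1 h3
    split_ifs at h1 h3 <;> split_ifs <;> omega
  · intro m
    have h2 := card_filter_cov2 mu.1 (p0.1, j) (j, p0.2) p0 hp0mu hnm1 hnm2 hne1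
      (fun r => (r.1 : ℕ) < m)
    have h3 := card_filter_cov2 mu.1 (p0.1, j) (j, p0.2) p0 hp0mu hnm1 hnm2 hne1
      (fun r => (r.2 : ℕ) < m)
    simp only [aV, aL, aR]
    dsimp only at h2 h3
    rw [hjval] at h2 h3
    split_ifs at h2 h3 <;> omega


def H (lam : NCP n) (s : ℕ) : ℤ := if s % 2 = 0 then aV lam (s/2) else aU lam ((s+1)/2)

lemma H_even (lam : NCP n) (k : ℕ) : H lam (2*k) = aV lam k := by
  unfold H
  rw [if_pos (by omega)]
  congr 1
  omega

lemma H_odd (lam : NCP n) (k : ℕ) : H lam (2*k+1) = aU lam (k+1) := by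
  unfold H
  rw [if_neg (by omega)]
  congr 1
  omega

lemma H_down (lam : NCP n) : ∀ s, s % 2 = 0 → H lam (s+1) = H lam s ∨ H lam (s+1) = H lam s - 1 := by
  intro s hs
  obtain ⟨k, rfl⟩ : ∃ k, s = 2*k := ⟨s/2, by omega⟩
  rw [H_even, H_odd]
  exact step_down lam k

lemma H_up (lam : NCP n) : ∀ s, s % 2 = 1 → H lam (s+1) = H lam s ∨ H lam (s+1) = H lam s + 1 := by
  intro s hs
  obtain ⟨k, rfl⟩ : ∃ k, s = 2*k+1 := ⟨s/2, by omega⟩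
  rw [show 2*k+1+1 = 2*(k+1) by ring, H_even, H_odd]
  exact step_up lam k

lemma H_zero (lam : NCP n) : H lam 0 = 0 := by
  have := H_even lam 0
  norm_num at this
  rw [this, aV_zero]

lemma H_top (lam : NCP n) : H lam (2*n) = 0 := by
  rw [H_even, aV_top]

lemma backward_heights (lam mu : NCP n)
    (hdom : ∀ k, 1 ≤ k → k ≤ n → aU lam k ≤ aU mu k ∧ aV lam k ≤ aV mu k) :
    NCPle lam mu := by
  suffices hgen : ∀ t : ℕ, ∀ mu : NCP n,
      (∀ k, 1 ≤ k → k ≤ n → aU lam k ≤ aU mu k ∧ aV lam k ≤ aV mu k) →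
      ((∑ k ∈ Finset.Icc 1 n, ((aU mu k - aU lam k) + (aV mu k - aV lam k))).toNat ≤ t) →
      NCPle lam mu by
    exact hgen _ mu hdom le_rfl
  intro t
  induction t with
  | zero =>
    intro mu hdom hsum
    by_cases hall : ∀ k, 1 ≤ k → k ≤ n → aU lam k = aU mu k ∧ aV lam k = aV mu k
    · rw [eq_of_heights lam mu hall]
      exact Relation.ReflTransGen.refl
    · exfalso
      push_neg at hall
      obtain ⟨ks, hk1, hkn, hkne⟩ := hall
      have hd := hdom ks hk1 hkn
      have hterm : ∀ m ∈ Finset.Icc 1 n,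
          0 ≤ (aU mu m - aU lam m) + (aV mu m - aV lam m) := by
        intro m hm
        rw [Finset.mem_Icc] at hm
        have := hdom m hm.1 hm.2
        omega
      have hstrict : aU lam ks < aU mu ks ∨ aV lam ks < aV mu ks := by
        by_contra hc
        push_neg at hc
        exact (hkne (le_antisymm hd.1 hc.1)) (le_antisymm hd.2 hc.2)
      have hone : 1 ≤ (aU mu ks - aU lam ks) + (aV mu ks - aV lam ks) := by omega
      have := Finset.single_le_sum hterm (Finset.mem_Icc.mpr ⟨hk1, hkn⟩)
      omega
  | succ t ih =>
    intro mu hdom hsum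
    by_cases hall : ∀ k, 1 ≤ k → k ≤ n → aU lam k = aU mu k ∧ aV lam k = aV mu k
    · rw [eq_of_heights lam mu hall]
      exact Relation.ReflTransGen.refl
    · push_neg at hall
      obtain ⟨ks, hk1, hkn, hkne⟩ := hall
      have hd := hdom ks hk1 hkn
      have hstrict : aU lam ks < aU mu ks ∨ aV lam ks < aV mu ks := by
        by_contra hc
        push_neg at hc
        exact (hkne (le_antisymm hd.1 hc.1)) (le_antisymm hd.2 hc.2)
      have hterm : ∀ m ∈ Finset.Icc 1 n,
          0 ≤ (aU mu m - aU lam m) + (aV mu m - aV lam m) := by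
        intro m hm
        rw [Finset.mem_Icc] at hm
        have := hdom m hm.1 hm.2
        omega
      have hone : 1 ≤ (aU mu ks - aU lam ks) + (aV mu ks - aV lam ks) := by omega
      have hsum1 := Finset.single_le_sum hterm (Finset.mem_Icc.mpr ⟨hk1, hkn⟩)
      -- apply the selection lemma
      have hdomH : ∀ s, s ≤ 2*n → H lam s ≤ H mu s := by
        intro s hs
        rcases Nat.even_or_odd s with he | ho
        · obtain ⟨c, hc⟩ := he
          obtain ⟨k, rfl⟩ : ∃ k, s = 2*k := ⟨c, by omega⟩
          rw [H_even, H_even]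
          rcases Nat.eq_zero_or_pos k with rfl | hpos
          · rw [aV_zero, aV_zero]
          · exact (hdom k hpos (by omega)).2
        · obtain ⟨c, hc⟩ := ho
          obtain ⟨k, rfl⟩ : ∃ k, s = 2*k+1 := ⟨c, by omega⟩
          rw [H_odd, H_odd]
          exact (hdom (k+1) (by omega) (by omega)).1
      have hstrictH : ∃ s, s ≤ 2*n ∧ H lam s < H mu s := by
        rcases hstrict with h | h
        · refine ⟨2*(ks-1)+1, by omega, ?_⟩
          rw [H_odd, H_odd, show ks - 1 + 1 = ks by omega]
          exact h
        · refine ⟨2*ks, by omega, ?_⟩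
          rw [H_even, H_even]
          exact h
      rcases select (2*n) (H lam) (H mu) (by rw [H_zero, H_zero]) (by rw [H_top, H_top])
          (H_down lam) (H_down mu) (H_up lam) (H_up mu) hdomH hstrictH with
        ⟨s, hpar, hs1, hsN, hstr, hga, hgb⟩ | ⟨s, hpar, hs1, hsN, hstr, hga, hgb⟩
      · -- odd slot : split an arc
        obtain ⟨k, hka, hkb, rfl⟩ : ∃ k, 1 ≤ k ∧ k ≤ n ∧ s = 2*(k-1)+1 :=
          ⟨(s+1)/2, by omega, by omega, by omega⟩
        have hk' : k - 1 + 1 = k := by omega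
        rw [H_odd, H_odd, hk'] at hstr
        rw [show 2*(k-1)+1-1 = 2*(k-1) by omega, H_even, H_odd, hk'] at hga
        rw [show 2*(k-1)+1+1 = 2*k by omega, H_even, H_odd, hk'] at hgb
        have hpos : 1 ≤ aU mu k := by
          have := aU_nonneg lam k
          omega
        obtain ⟨nu, hcov, hUnu, hVnu⟩ := exists_split_cover mu k hka hkb hgb hga hpos
        have hdomnu : ∀ m, 1 ≤ m → m ≤ n → aU lam m ≤ aU nu m ∧ aV lam m ≤ aV nu m := by
          intro m h1 h2
          have hdm := hdom m h1 h2
          have hU := hUnu m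
          have hV := hVnu m
          by_cases hmk : m = k
          · subst hmk
            rw [if_pos rfl] at hU
            exact ⟨by omega, by omega⟩
          · rw [if_neg hmk] at hU
            exact ⟨by omega, by omega⟩
        have hsumnu : (∑ m ∈ Finset.Icc 1 n,
            ((aU nu m - aU lam m) + (aV nu m - aV lam m))).toNat ≤ t := by
          have hcong : ∀ m ∈ Finset.Icc 1 n,
              (aU nu m - aU lam m) + (aV nu m - aV lam m)
                = ((aU mu m - aU lam m) + (aV mu m - aV lam m))
                  - (if m = k then 1 else 0) := by
            intro m _
            have hU := hUnu m
            have hV := hVnu m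
            split_ifs at hU ⊢ <;> omega
          rw [Finset.sum_congr rfl hcong, Finset.sum_sub_distrib,
            Finset.sum_ite_eq' (Finset.Icc 1 n) k (fun _ => (1:ℤ)),
            if_pos (Finset.mem_Icc.mpr ⟨hka, hkb⟩)]
          omega
        exact Relation.ReflTransGen.tail (ih nu hdomnu hsumnu) hcov
      · -- even slot : remove a short arc
        obtain ⟨k, hka, hkb, rfl⟩ : ∃ k, 1 ≤ k ∧ k + 1 ≤ n ∧ s = 2*k :=
          ⟨s/2, by omega, by omega, by omega⟩
        have hk' : k - 1 + 1 = k := by omega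
        rw [H_even, H_even] at hstr
        rw [show 2*k-1 = 2*(k-1)+1 by omega, H_odd, hk', H_even] at hga
        rw [show 2*k+1 = 2*k+1 by rfl, H_odd, H_even] at hgb
        obtain ⟨nu, hcov, hUnu, hVnu⟩ := exists_peak_cover mu k hka hkb hga hgb
        have hdomnu : ∀ m, 1 ≤ m → m ≤ n → aU lam m ≤ aU nu m ∧ aV lam m ≤ aV nu m := by
          intro m h1 h2
          have hdm := hdom m h1 h2
          have hU := hUnu m
          have hV := hVnu m
          by_cases hmk : m = k
          · subst hmk
            rw [if_pos rfl] at hV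
            exact ⟨by omega, by omega⟩
          · rw [if_neg hmk] at hV
            exact ⟨by omega, by omega⟩
        have hsumnu : (∑ m ∈ Finset.Icc 1 n,
            ((aU nu m - aU lam m) + (aV nu m - aV lam m))).toNat ≤ t := by
          have hcong : ∀ m ∈ Finset.Icc 1 n,
              (aU nu m - aU lam m) + (aV nu m - aV lam m)
                = ((aU mu m - aU lam m) + (aV mu m - aV lam m))
                  - (if m = k then 1 else 0) := by
            intro m _
            have hU := hUnu m
            have hV := hVnu m
            split_ifs at hV ⊢ <;> omega
          rw [Finset.sum_congr rfl hcong, Finset.sum_sub_distrib,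
            Finset.sum_ite_eq' (Finset.Icc 1 n) k (fun _ => (1:ℤ)),
            if_pos (Finset.mem_Icc.mpr ⟨hka, by omega⟩)]
          omega
        exact Relation.ReflTransGen.tail (ih nu hdomnu hsumnu) hcov

lemma bridge1 (lam : NCP n) (k : ℕ) (hk : 1 ≤ k) :
    ((NCP.lpos lam).filter (fun a : Fin n => (a : ℕ) + 1 < k)).card = aL lam (k-1) := by
  rw [card_lpos_filter lam (fun a : Fin n => (a : ℕ) + 1 < k)]
  unfold aL
  congr 1
  apply Finset.filter_congr
  intro p _
  constructor <;> intro h <;> omega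

lemma bridge2 (lam : NCP n) (k : ℕ) :
    ((NCP.lpos lam).filter (fun a : Fin n => (a : ℕ) < k)).card = aL lam k :=
  card_lpos_filter lam (fun a : Fin n => (a : ℕ) < k)

lemma bridge3 (lam : NCP n) (k : ℕ) :
    ((NCP.rpos lam).filter (fun a : Fin n => (a : ℕ) < k)).card = aR lam k :=
  card_rpos_filter lam (fun a : Fin n => (a : ℕ) < k)

lemma bridgeM1 (lam : NCP n) (k : ℕ) (hk : 1 ≤ k) (D : DecidableEq ℕ)
    (F : DecidablePred (fun a : ℕ => a + 1 < k)) :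
    (@Finset.filter ℕ (fun a => a + 1 < k) F
        (@Finset.image _ ℕ D Fin.val (NCP.lpos lam))).card = aL lam (k-1) := by
  have hD : D = instDecidableEqNat := Subsingleton.elim _ _
  subst hD
  have hF : F = fun a => Nat.decLt (a+1) k := Subsingleton.elim _ _
  subst hF
  rw [Finset.filter_image, Finset.card_image_of_injOn Fin.val_injective.injOn]
  exact bridge1 lam k hk

lemma bridgeM2 (lam : NCP n) (k : ℕ) (D : DecidableEq ℕ)
    (F : DecidablePred (fun a : ℕ => a < k)) :
    (@Finset.filter ℕ (fun a => a < k) F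
        (@Finset.image _ ℕ D Fin.val (NCP.lpos lam))).card = aL lam k := by
  have hD : D = instDecidableEqNat := Subsingleton.elim _ _
  subst hD
  have hF : F = fun a => Nat.decLt a k := Subsingleton.elim _ _
  subst hF
  rw [Finset.filter_image, Finset.card_image_of_injOn Fin.val_injective.injOn]
  exact bridge2 lam k

lemma bridgeM3 (lam : NCP n) (k : ℕ) (D : DecidableEq ℕ)
    (F : DecidablePred (fun a : ℕ => a < k)) :
    (@Finset.filter ℕ (fun a => a < k) F
        (@Finset.image _ ℕ D Fin.val (NCP.rpos lam))).card = aR lam k := by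
  have hD : D = instDecidableEqNat := Subsingleton.elim _ _
  subst hD
  have hF : F = fun a => Nat.decLt a k := Subsingleton.elim _ _
  subst hF
  rw [Finset.filter_image, Finset.card_image_of_injOn Fin.val_injective.injOn]
  exact bridge3 lam k

theorem stmt2' (lam mu : NCP n) :
    NCPle lam mu ↔
      ∀ k : ℕ, 1 ≤ k → k ≤ n →
        ((((NCP.lpos lam).filter (fun a => (a : ℕ) + 1 < k)).card : ℤ) -
            (((NCP.rpos lam).filter (fun a => (a : ℕ) < k)).card : ℤ) ≤
          (((NCP.lpos mu).filter (fun a => (a : ℕ) + 1 < k)).card : ℤ) -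
            (((NCP.rpos mu).filter (fun a => (a : ℕ) < k)).card : ℤ)) ∧
        ((((NCP.lpos lam).filter (fun a => (a : ℕ) < k)).card : ℤ) -
            (((NCP.rpos lam).filter (fun a => (a : ℕ) < k)).card : ℤ) ≤
          (((NCP.lpos mu).filter (fun a => (a : ℕ) < k)).card : ℤ) -
            (((NCP.rpos mu).filter (fun a => (a : ℕ) < k)).card : ℤ)) := by
  simp only [Finset.bind_def, Finset.pure_def, Finset.sup_singleton_apply]
  constructor
  · intro h k hk1 hkn
    have hf := forward_heights lam mu h k
    obtain ⟨hU, hV⟩ := hf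
    unfold aU at hU
    unfold aV at hV
    rw [bridgeM1 lam k hk1 _ _, bridgeM1 mu k hk1 _ _, bridgeM2 lam k _ _, bridgeM2 mu k _ _,
      bridgeM3 lam k _ _, bridgeM3 mu k _ _]
    exact ⟨hU, hV⟩
  · intro h
    apply backward_heights
    intro k hk1 hkn
    have hh := h k hk1 hkn
    rw [bridgeM1 lam k hk1 _ _, bridgeM1 mu k hk1 _ _, bridgeM2 lam k _ _, bridgeM2 mu k _ _,
      bridgeM3 lam k _ _, bridgeM3 mu k _ _] at hh
    unfold aU aV
    exact hh

end NCPwork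

/-- `λ ⪯ μ` iff the two families of inequalities on the cardinalities of
initial segments of `λ⁺`, `λ⁻` hold (differences taken in `ℤ`; 1-based labels, so
`{1,…,k} ∩ λ⁺` is the set of `a ∈ λ⁺` with `(a : ℕ) < k`, and `{1,…,k−1} ∩ λ⁺` is
the set of `a ∈ λ⁺` with `(a : ℕ) + 1 < k`). -/
theorem stmt2 (n : ℕ) (lam mu : NCP n) :
    NCPle lam mu ↔
      ∀ k : ℕ, 1 ≤ k → k ≤ n →
        ((((NCP.lpos lam).filter (fun a => (a : ℕ) + 1 < k)).card : ℤ) -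
            (((NCP.rpos lam).filter (fun a => (a : ℕ) < k)).card : ℤ) ≤
          (((NCP.lpos mu).filter (fun a => (a : ℕ) + 1 < k)).card : ℤ) -
            (((NCP.rpos mu).filter (fun a => (a : ℕ) < k)).card : ℤ)) ∧
        ((((NCP.lpos lam).filter (fun a => (a : ℕ) < k)).card : ℤ) -
            (((NCP.rpos lam).filter (fun a => (a : ℕ) < k)).card : ℤ) ≤
          (((NCP.lpos mu).filter (fun a => (a : ℕ) < k)).card : ℤ) -
            (((NCP.rpos mu).filter (fun a => (a : ℕ) < k)).card : ℤ)) :=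
  NCPwork.stmt2' lam mu
end
end

section
/- For every n ≥ 0, the map λ ↦ C_λ is a bijection from the set of noncrossing partitions of size n to the set of excedance classes S_n/∼; that is, every C_λ is nonempty, distinct noncrossing partitions give distinct (disjoint) classes, and every equivalence class of ∼ equals C_λ for some noncrossing partition λ. In particular, the number of excedance classes of S_n is the n-th Catalan number. -/
open scoped Classical

noncomputable section

open MvPolynomial

namespace StmtAux

open Finset

variable {n : ℕ}

theorem ncp_partner_unique {A : Finset (Fin n × Fin n)} (hA : IsNCP n A)
    {i i' j : Fin n} (h : (i, j) ∈ A) (h' : (i', j) ∈ A) : i = i' := by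
  by_contra hne
  rcases le_total i i' with hle | hle
  · exact hA.2 _ h _ h' (by simp [hne]) ⟨hle, hA.1 _ h', le_refl _⟩
  · exact hA.2 _ h' _ h (by simp [Ne.symm hne]) ⟨hle, hA.1 _ h, le_refl _⟩

theorem ncp_rpartner_unique {A : Finset (Fin n × Fin n)} (hA : IsNCP n A)
    {i j j' : Fin n} (h : (i, j) ∈ A) (h' : (i, j') ∈ A) : j = j' := by
  by_contra hne
  rcases le_total j j' with hle | hle
  · exact hA.2 _ h _ h' (by simp [hne]) ⟨le_refl _, hA.1 _ h, hle⟩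
  · exact hA.2 _ h' _ h (by simp [Ne.symm hne]) ⟨le_refl _, hA.1 _ h', hle⟩

theorem ncp_fst_injOn {A : Finset (Fin n × Fin n)} (hA : IsNCP n A) :
    Set.InjOn Prod.fst (A : Set (Fin n × Fin n)) := by
  intro p hp q hq h
  have hp' : (p.1, p.2) ∈ A := by simpa using hp
  have hq' : (q.1, q.2) ∈ A := by simpa using hq
  rw [h] at hp'
  have := ncp_rpartner_unique hA hp' hq'
  exact Prod.ext h this

theorem ncp_snd_injOn {A : Finset (Fin n × Fin n)} (hA : IsNCP n A) :
    Set.InjOn Prod.snd (A : Set (Fin n × Fin n)) := by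
  intro p hp q hq h
  have hp' : (p.1, p.2) ∈ A := by simpa using hp
  have hq' : (q.1, q.2) ∈ A := by simpa using hq
  rw [h] at hp'
  have := ncp_partner_unique hA hp' hq'
  exact Prod.ext this h

theorem ncp_card_fst {A : Finset (Fin n × Fin n)} (hA : IsNCP n A) :
    (A.image Prod.fst).card = A.card :=
  Finset.card_image_of_injOn (ncp_fst_injOn hA)

theorem ncp_card_snd {A : Finset (Fin n × Fin n)} (hA : IsNCP n A) :
    (A.image Prod.snd).card = A.card :=
  Finset.card_image_of_injOn (ncp_snd_injOn hA)

/-- prefix condition for a noncrossing partition -/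
theorem ncp_prefix {A : Finset (Fin n × Fin n)} (hA : IsNCP n A) (x : Fin n) :
    ((A.image Prod.snd).filter (· ≤ x)).card ≤ ((A.image Prod.fst).filter (· < x)).card := by
  classical
  have key : ∀ j ∈ (A.image Prod.snd).filter (· ≤ x), ∃ i, (i, j) ∈ A := by
    intro j hj
    rcases Finset.mem_image.mp (Finset.mem_filter.mp hj).1 with ⟨p, hp, hpj⟩
    exact ⟨p.1, by rwa [← hpj, Prod.mk.eta]⟩
  apply Finset.card_le_card_of_injOn (fun j => if h : ∃ i, (i, j) ∈ A then h.choose else j)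
  · intro j hj
    have hex := key j hj
    have hle : j ≤ x := (Finset.mem_filter.mp hj).2
    dsimp only
    rw [dif_pos hex]
    have harc := hex.choose_spec
    refine Finset.mem_filter.mpr ⟨Finset.mem_image.mpr ⟨_, harc, rfl⟩, ?_⟩
    exact lt_of_lt_of_le (hA.1 _ harc) hle
  · intro j hj j' hj' heq
    have hexj := key j (by simpa using hj)
    have hexj' := key j' (by simpa using hj')
    dsimp only at heq
    rw [dif_pos hexj, dif_pos hexj'] at heq
    have h1 := hexj.choose_spec
    have h2 := hexj'.choose_spec
    rw [heq] at h1
    exact ncp_rpartner_unique hA h1 h2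

theorem ncp_image_fst_erase {A : Finset (Fin n × Fin n)} (hA : IsNCP n A)
    {i j : Fin n} (hij : (i, j) ∈ A) :
    (A.erase (i, j)).image Prod.fst = (A.image Prod.fst).erase i := by
  ext a
  simp only [Finset.mem_image, Finset.mem_erase]
  constructor
  · rintro ⟨p, ⟨hne, hpA⟩, rfl⟩
    refine ⟨fun h => hne ?_, ⟨p, hpA, rfl⟩⟩
    have hp' : (p.1, p.2) ∈ A := by simpa using hpA
    rw [h] at hp'
    have := ncp_rpartner_unique hA hp' hij
    rw [← h, ← this]
  · rintro ⟨hne, p, hpA, rfl⟩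
    exact ⟨p, ⟨fun h => hne (by rw [h]), hpA⟩, rfl⟩

theorem ncp_image_snd_erase {A : Finset (Fin n × Fin n)} (hA : IsNCP n A)
    {i j : Fin n} (hij : (i, j) ∈ A) :
    (A.erase (i, j)).image Prod.snd = (A.image Prod.snd).erase j := by
  ext a
  simp only [Finset.mem_image, Finset.mem_erase]
  constructor
  · rintro ⟨p, ⟨hne, hpA⟩, rfl⟩
    refine ⟨fun h => hne ?_, ⟨p, hpA, rfl⟩⟩
    have hp' : (p.1, p.2) ∈ A := by simpa using hpA
    rw [h] at hp'
    have := ncp_partner_unique hA hp' hij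
    rw [← h, ← this]
  · rintro ⟨hne, p, hpA, rfl⟩
    exact ⟨p, ⟨fun h => hne (by rw [h]), hpA⟩, rfl⟩

theorem ncp_subset {A B : Finset (Fin n × Fin n)} (h : A ⊆ B) (hB : IsNCP n B) : IsNCP n A :=
  ⟨fun p hp => hB.1 p (h hp), fun p hp q hq => hB.2 p (h hp) q (h hq)⟩

theorem min'_congr {α : Type*} [LinearOrder α] {s t : Finset α} (h : s = t)
    (hs : s.Nonempty) (ht : t.Nonempty) : s.min' hs = t.min' ht := by subst h; rfl

theorem max'_congr {α : Type*} [LinearOrder α] {s t : Finset α} (h : s = t)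
    (hs : s.Nonempty) (ht : t.Nonempty) : s.max' hs = t.max' ht := by subst h; rfl

theorem ncp_min_arc {A : Finset (Fin n × Fin n)} (hA : IsNCP n A)
    (hMne : (A.image Prod.snd).Nonempty)
    (hne : (((A.image Prod.fst)).filter (· < (A.image Prod.snd).min' hMne)).Nonempty) :
    ((((A.image Prod.fst)).filter (· < (A.image Prod.snd).min' hMne)).max' hne,
      (A.image Prod.snd).min' hMne) ∈ A := by
  classical
  set M := A.image Prod.snd with hM
  set m := M.min' hMne with hm
  set P := A.image Prod.fst with hP
  set pmax := (P.filter (· < m)).max' hne with hpmax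
  have hmmem : m ∈ M := Finset.min'_mem _ _
  rcases Finset.mem_image.mp hmmem with ⟨q, hq, hq2⟩
  have hq' : (q.1, m) ∈ A := by rwa [← hq2, Prod.mk.eta]
  have hq1P : q.1 ∈ P.filter (· < m) :=
    Finset.mem_filter.mpr ⟨Finset.mem_image.mpr ⟨q, hq, rfl⟩, by
      have := hA.1 _ hq'; exact this⟩
  have hle : q.1 ≤ pmax := Finset.le_max' _ _ hq1P
  rcases eq_or_lt_of_le hle with heq | hlt
  · rwa [← heq]
  · exfalso
    have hpmaxmem := Finset.max'_mem (P.filter (· < m)) hne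
    have hpmaxP : pmax ∈ P := (Finset.mem_filter.mp hpmaxmem).1
    have hpmaxlt : pmax < m := (Finset.mem_filter.mp hpmaxmem).2
    rcases Finset.mem_image.mp hpmaxP with ⟨r, hr, hr1⟩
    have hr' : (pmax, r.2) ∈ A := by rwa [← hr1, Prod.mk.eta]
    have hr2M : r.2 ∈ M := Finset.mem_image.mpr ⟨r, hr, rfl⟩
    have hmr2 : m ≤ r.2 := Finset.min'_le _ _ hr2M
    exact hA.2 _ hq' _ hr' (fun hcontra => absurd (congrArg Prod.fst hcontra) (ne_of_lt hlt)) ⟨le_of_lt hlt, hpmaxlt, hmr2⟩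

theorem ncp_unique {A B : Finset (Fin n × Fin n)} (hA : IsNCP n A) (hB : IsNCP n B)
    (hf : A.image Prod.fst = B.image Prod.fst) (hs : A.image Prod.snd = B.image Prod.snd) :
    A = B := by
  classical
  suffices H : ∀ k (A B : Finset (Fin n × Fin n)), A.card ≤ k → IsNCP n A → IsNCP n B →
      A.image Prod.fst = B.image Prod.fst → A.image Prod.snd = B.image Prod.snd → A = B from
    H A.card A B le_rfl hA hB hf hs
  intro k
  induction k with
  | zero =>
    intro A B hcard hA hB hf hs
    have hAe : A = ∅ := Finset.card_eq_zero.mp (Nat.le_zero.mp hcard)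
    subst hAe
    have : B.image Prod.snd = ∅ := by simpa using hs.symm
    have hBe : B = ∅ := Finset.image_eq_empty.mp this
    rw [hBe]
  | succ k ih =>
    intro A B hcard hA hB hf hs
    rcases Finset.eq_empty_or_nonempty A with hAe | hAne
    · subst hAe
      have : B.image Prod.snd = ∅ := by simpa using hs.symm
      rw [Finset.image_eq_empty.mp this]
    · have hMne : (A.image Prod.snd).Nonempty := hAne.image _
      have hMne' : (B.image Prod.snd).Nonempty := by rwa [← hs]
      set m := (A.image Prod.snd).min' hMne with hm
      -- the filter is nonempty
      have hPne : ((A.image Prod.fst).filter (· < m)).Nonempty := by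
        rcases Finset.mem_image.mp (Finset.min'_mem _ hMne) with ⟨q, hq, hq2⟩
        have hq' : (q.1, m) ∈ A := by rwa [hm, ← hq2, Prod.mk.eta]
        exact ⟨q.1, Finset.mem_filter.mpr ⟨Finset.mem_image.mpr ⟨q, hq, rfl⟩, hA.1 _ hq'⟩⟩
      set p := ((A.image Prod.fst).filter (· < m)).max' hPne with hp
      have harcA : (p, m) ∈ A := ncp_min_arc hA hMne hPne
      have hmB : m = (B.image Prod.snd).min' hMne' := by
        rw [hm]; exact min'_congr hs _ _
      have hPneB : ((B.image Prod.fst).filter (· < (B.image Prod.snd).min' hMne')).Nonempty := by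
        rw [← hmB, ← hf]; exact hPne
      have harcB : (p, m) ∈ B := by
        have := ncp_min_arc hB hMne' hPneB
        have hpeq : ((B.image Prod.fst).filter
            (· < (B.image Prod.snd).min' hMne')).max' hPneB = p := by
          rw [hp]; exact max'_congr (by rw [hf, hmB]) _ _
        rw [hpeq, ← hmB] at this
        exact this
      have hA' : IsNCP n (A.erase (p, m)) := ncp_subset (Finset.erase_subset _ _) hA
      have hB' : IsNCP n (B.erase (p, m)) := ncp_subset (Finset.erase_subset _ _) hB
      have heq : A.erase (p, m) = B.erase (p, m) := by
        apply ih
        · have := Finset.card_erase_of_mem harcA; omega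
        · exact hA'
        · exact hB'
        · rw [ncp_image_fst_erase hA harcA, ncp_image_fst_erase hB harcB, hf]
        · rw [ncp_image_snd_erase hA harcA, ncp_image_snd_erase hB harcB, hs]
      have : insert (p, m) (A.erase (p, m)) = insert (p, m) (B.erase (p, m)) := by rw [heq]
      rwa [Finset.insert_erase harcA, Finset.insert_erase harcB] at this

theorem ncp_exists (P M : Finset (Fin n)) (hcard : P.card = M.card)
    (hpre : ∀ x : Fin n, (M.filter (· ≤ x)).card ≤ (P.filter (· < x)).card) :
    ∃ A : Finset (Fin n × Fin n), IsNCP n A ∧ A.image Prod.fst = P ∧ A.image Prod.snd = M := by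
  classical
  suffices H : ∀ k (P M : Finset (Fin n)), M.card ≤ k → P.card = M.card →
      (∀ x : Fin n, (M.filter (· ≤ x)).card ≤ (P.filter (· < x)).card) →
      ∃ A : Finset (Fin n × Fin n), IsNCP n A ∧ A.image Prod.fst = P ∧ A.image Prod.snd = M from
    H M.card P M le_rfl hcard hpre
  intro k
  induction k with
  | zero =>
    intro P M hk hcard _
    have hMe : M = ∅ := Finset.card_eq_zero.mp (Nat.le_zero.mp hk)
    have hPe : P = ∅ := Finset.card_eq_zero.mp (by rw [hcard, hMe]; simp)
    exact ⟨∅, ⟨by simp, by simp⟩, by simp [hPe], by simp [hMe]⟩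
  | succ k ih =>
    intro P M hk hcard hpre
    rcases Finset.eq_empty_or_nonempty M with hMe | hMne
    · have hPe : P = ∅ := Finset.card_eq_zero.mp (by rw [hcard, hMe]; simp)
      exact ⟨∅, ⟨by simp, by simp⟩, by simp [hPe], by simp [hMe]⟩
    · set m := M.min' hMne with hm
      have hmM : m ∈ M := Finset.min'_mem _ _
      have hPne : (P.filter (· < m)).Nonempty := by
        rw [← Finset.card_pos]
        have h1 : 1 ≤ (M.filter (· ≤ m)).card :=
          Finset.card_pos.mpr ⟨m, Finset.mem_filter.mpr ⟨hmM, le_refl _⟩⟩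
        exact lt_of_lt_of_le h1 (hpre m)
      set p := (P.filter (· < m)).max' hPne with hp
      have hpmem := Finset.max'_mem (P.filter (· < m)) hPne
      have hpP : p ∈ P := (Finset.mem_filter.mp hpmem).1
      have hpm : p < m := (Finset.mem_filter.mp hpmem).2
      obtain ⟨A', hA', hf', hs'⟩ := ih (P.erase p) (M.erase m)
        (by rw [Finset.card_erase_of_mem hmM]; omega)
        (by rw [Finset.card_erase_of_mem hmM, Finset.card_erase_of_mem hpP, hcard])
        (by
          intro x
          rcases lt_or_ge x m with hxm | hmx
          · have : (M.erase m).filter (· ≤ x) = ∅ := by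
              apply Finset.eq_empty_of_forall_notMem
              intro j hj
              rcases Finset.mem_filter.mp hj with ⟨hj1, hj2⟩
              rcases Finset.mem_erase.mp hj1 with ⟨hj3, hj4⟩
              have := Finset.min'_le M j hj4
              rw [← hm] at this
              exact absurd (lt_of_le_of_lt hj2 hxm) (not_lt.mpr this)
            simp [this]
          · have h1 : (M.erase m).filter (· ≤ x) = (M.filter (· ≤ x)).erase m := by
              rw [Finset.filter_erase]
            have h2 : (P.erase p).filter (· < x) = (P.filter (· < x)).erase p := by
              rw [Finset.filter_erase]
            have e1 : m ∈ M.filter (· ≤ x) := Finset.mem_filter.mpr ⟨hmM, hmx⟩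
            have e2 : p ∈ P.filter (· < x) :=
              Finset.mem_filter.mpr ⟨hpP, lt_of_lt_of_le hpm hmx⟩
            rw [h1, h2, Finset.card_erase_of_mem e1, Finset.card_erase_of_mem e2]
            exact Nat.sub_le_sub_right (hpre x) 1)
      refine ⟨insert (p, m) A', ⟨?_, ?_⟩, ?_, ?_⟩
      · intro q hq
        rcases Finset.mem_insert.mp hq with h | h
        · rw [h]; exact hpm
        · exact hA'.1 _ h
      · intro q hq r hr hqr hpat
        rcases Finset.mem_insert.mp hq with h | h <;> rcases Finset.mem_insert.mp hr with h' | h'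
        · exact hqr (h.trans h'.symm)
        · -- q = (p,m), r ∈ A' : pattern p ≤ r.1 < m ≤ r.2
          rw [h] at hpat
          have hr1 : r.1 ∈ P.erase p := by rw [← hf']; exact Finset.mem_image.mpr ⟨r, h', rfl⟩
          rcases Finset.mem_erase.mp hr1 with ⟨hr1ne, hr1P⟩
          have : r.1 ∈ P.filter (· < m) := Finset.mem_filter.mpr ⟨hr1P, hpat.2.1⟩
          have := Finset.le_max' _ _ this
          rw [← hp] at this
          exact hr1ne (le_antisymm this hpat.1)
        · -- r = (p,m), q ∈ A' : pattern q.1 ≤ p < q.2 ≤ m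
          rw [h'] at hpat
          have hq2 : q.2 ∈ M.erase m := by rw [← hs']; exact Finset.mem_image.mpr ⟨q, h, rfl⟩
          rcases Finset.mem_erase.mp hq2 with ⟨hq2ne, hq2M⟩
          have := Finset.min'_le M q.2 hq2M
          rw [← hm] at this
          exact hq2ne (le_antisymm hpat.2.2 this)
        · exact hA'.2 _ h _ h' hqr hpat
      · rw [Finset.image_insert, hf']
        exact Finset.insert_erase hpP
      · rw [Finset.image_insert, hs']
        exact Finset.insert_erase hmM

/-- pointwise domination of ordered enumerations from prefix-count domination -/
theorem orderEmb_dom {s t : Finset (Fin n)} {k : ℕ} (hs : s.card = k) (ht : t.card = k)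
    (dom : ∀ x : Fin n, (t.filter (· ≤ x)).card ≤ (s.filter (· ≤ x)).card) (i : Fin k) :
    s.orderEmbOfFin hs i ≤ t.orderEmbOfFin ht i := by
  classical
  by_contra hcon
  push_neg at hcon
  set x := t.orderEmbOfFin ht i with hx
  have h1 : i + 1 ≤ (t.filter (· ≤ x)).card := by
    have : (Finset.Iic i).card ≤ (t.filter (· ≤ x)).card := by
      apply Finset.card_le_card_of_injOn (t.orderEmbOfFin ht)
      · intro j hj
        refine Finset.mem_filter.mpr ⟨Finset.orderEmbOfFin_mem t ht j, ?_⟩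
        exact (t.orderEmbOfFin ht).monotone (Finset.mem_Iic.mp hj)
      · exact fun a _ b _ h => (t.orderEmbOfFin ht).injective h
    rwa [Fin.card_Iic] at this
  have h2 : (s.filter (· ≤ x)).card ≤ i := by
    have hsub : s.filter (· ≤ x) ⊆ (Finset.Iio i).image (s.orderEmbOfFin hs) := by
      intro y hy
      rcases Finset.mem_filter.mp hy with ⟨hys, hyx⟩
      have : y ∈ Set.range (s.orderEmbOfFin hs) := by
        rw [Finset.range_orderEmbOfFin]; exact hys
      rcases this with ⟨j, hj⟩
      have hji : j < i := by
        have : s.orderEmbOfFin hs j < s.orderEmbOfFin hs i := by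
          rw [hj]; exact lt_of_le_of_lt hyx hcon
        exact (OrderEmbedding.lt_iff_lt _).mp this
      exact Finset.mem_image.mpr ⟨j, Finset.mem_Iio.mpr hji, hj⟩
    calc (s.filter (· ≤ x)).card ≤ ((Finset.Iio i).image (s.orderEmbOfFin hs)).card :=
          Finset.card_le_card hsub
      _ ≤ (Finset.Iio i).card := Finset.card_image_le
      _ = i := Fin.card_Iio i
  have := dom x
  omega

theorem compl_filter_card (S : Finset (Fin n)) (q : Fin n → Prop) [DecidablePred q] :
    ((Finset.univ \ S).filter q).card + (S.filter q).card = (Finset.univ.filter q).card := by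
  classical
  have h1 : (Finset.univ \ S).filter q = Finset.univ.filter q \ S.filter q := by
    ext y; simp [Finset.mem_sdiff, Finset.mem_filter]; tauto
  rw [h1, Finset.card_sdiff_of_subset (Finset.filter_subset_filter q (Finset.subset_univ S))]
  have := Finset.card_le_card (Finset.filter_subset_filter q (Finset.subset_univ S))
  omega

namespace ForNCP

variable (lam : NCP n)

theorem card_lpos_eq : (NCP.lpos lam).card = (NCP.rpos lam).card := by
  rw [NCP.lpos, NCP.rpos, ncp_card_fst lam.2, ncp_card_snd lam.2]

theorem rpos_mem_iff (j : Fin n) : j ∈ NCP.rpos lam ↔ ∃ i, (i, j) ∈ lam.1 := by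
  constructor
  · intro h
    rcases Finset.mem_image.mp h with ⟨p, hp, hpj⟩
    exact ⟨p.1, by rwa [← hpj, Prod.mk.eta]⟩
  · rintro ⟨i, hi⟩
    exact Finset.mem_image.mpr ⟨(i, j), hi, rfl⟩

theorem card_compl_eq : (Finset.univ \ NCP.rpos lam).card = (Finset.univ \ NCP.lpos lam).card := by
  rw [Finset.card_sdiff_of_subset (Finset.subset_univ _), Finset.card_sdiff_of_subset (Finset.subset_univ _),
    card_lpos_eq]

/-- the witness permutation as a function -/
noncomputable def wfun : Fin n → Fin n := fun j =>
  if h : ∃ i, (i, j) ∈ lam.1 then h.choose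
  else ((Finset.univ \ NCP.lpos lam).orderEmbOfFin (card_compl_eq lam).symm
    (((Finset.univ \ NCP.rpos lam).orderIsoOfFin rfl).symm
      ⟨j, by simp [Finset.mem_sdiff, rpos_mem_iff, h]⟩))

theorem wfun_mem_rpos {j : Fin n} (h : j ∈ NCP.rpos lam) :
    (wfun lam j, j) ∈ lam.1 ∧ wfun lam j < j ∧ wfun lam j ∈ NCP.lpos lam := by
  have hex : ∃ i, (i, j) ∈ lam.1 := (rpos_mem_iff lam j).mp h
  have harc : (wfun lam j, j) ∈ lam.1 := by
    rw [wfun, dif_pos hex]; exact hex.choose_spec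
  exact ⟨harc, lam.2.1 _ harc, Finset.mem_image.mpr ⟨_, harc, rfl⟩⟩

theorem wfun_not_rpos {j : Fin n} (h : j ∉ NCP.rpos lam) :
    wfun lam j ∈ Finset.univ \ NCP.lpos lam ∧ j ≤ wfun lam j := by
  have hex : ¬∃ i, (i, j) ∈ lam.1 := by rwa [← rpos_mem_iff lam j]
  rw [wfun, dif_neg hex]
  constructor
  · exact Finset.orderEmbOfFin_mem _ _ _
  · set i := ((Finset.univ \ NCP.rpos lam).orderIsoOfFin rfl).symm
      ⟨j, by simp [Finset.mem_sdiff, rpos_mem_iff, hex]⟩ with hi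
    have hj : (Finset.univ \ NCP.rpos lam).orderEmbOfFin rfl i = j := by
      rw [← Finset.coe_orderIsoOfFin_apply, hi, OrderIso.apply_symm_apply]
    have dom : ∀ x : Fin n, ((Finset.univ \ NCP.lpos lam).filter (· ≤ x)).card ≤
        ((Finset.univ \ NCP.rpos lam).filter (· ≤ x)).card := by
      intro x
      have h1 := compl_filter_card (NCP.lpos lam) (· ≤ x)
      have h2 := compl_filter_card (NCP.rpos lam) (· ≤ x)
      have h3 : ((NCP.rpos lam).filter (· ≤ x)).card ≤ ((NCP.lpos lam).filter (· ≤ x)).card := by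
        refine le_trans (ncp_prefix lam.2 x) (Finset.card_le_card ?_)
        intro y hy
        rcases Finset.mem_filter.mp hy with ⟨hy1, hy2⟩
        exact Finset.mem_filter.mpr ⟨hy1, le_of_lt hy2⟩
      omega
    have := orderEmb_dom rfl (card_compl_eq lam).symm dom i
    rwa [hj] at this

theorem wfun_injective : Function.Injective (wfun lam) := by
  intro j j' heq
  by_cases hj : j ∈ NCP.rpos lam <;> by_cases hj' : j' ∈ NCP.rpos lam
  · obtain ⟨harc, _, _⟩ := wfun_mem_rpos lam hj
    obtain ⟨harc', _, _⟩ := wfun_mem_rpos lam hj'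
    rw [heq] at harc
    exact ncp_rpartner_unique lam.2 harc harc'
  · obtain ⟨_, _, hmem⟩ := wfun_mem_rpos lam hj
    obtain ⟨hmem', _⟩ := wfun_not_rpos lam hj'
    rw [heq] at hmem
    exact absurd hmem (Finset.mem_sdiff.mp hmem').2.elim
  · obtain ⟨_, _, hmem'⟩ := wfun_mem_rpos lam hj'
    obtain ⟨hmem, _⟩ := wfun_not_rpos lam hj
    rw [← heq] at hmem'
    exact absurd hmem' (Finset.mem_sdiff.mp hmem).2.elim
  · -- both not in rpos : orderEmb ∘ orderIso.symm is injective
    have hexj : ¬∃ i, (i, j) ∈ lam.1 := by rwa [← rpos_mem_iff lam j]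
    have hexj' : ¬∃ i, (i, j') ∈ lam.1 := by rwa [← rpos_mem_iff lam j']
    simp only [wfun] at heq
    rw [dif_neg hexj, dif_neg hexj'] at heq
    have h2 := (Finset.univ \ NCP.lpos lam).orderEmbOfFin (card_compl_eq lam).symm
      |>.injective heq
    have h3 := ((Finset.univ \ NCP.rpos lam).orderIsoOfFin rfl).symm.injective h2
    exact congrArg Subtype.val h3

/-- the witness permutation -/
noncomputable def wperm : Equiv.Perm (Fin n) :=
  Equiv.ofBijective (wfun lam) (Finite.injective_iff_bijective.mp (wfun_injective lam))

theorem wperm_apply (j : Fin n) : wperm lam j = wfun lam j := rfl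

theorem excPos_wperm : ExcPos (wperm lam) = Finset.univ \ NCP.rpos lam := by
  ext j
  simp only [ExcPos, Finset.mem_filter, Finset.mem_univ, true_and, Finset.mem_sdiff]
  rw [wperm_apply]
  constructor
  · intro hle h
    exact absurd hle (not_le.mpr (wfun_mem_rpos lam h).2.1)
  · intro h
    exact (wfun_not_rpos lam h).2

theorem excVal_wperm : ExcVal (wperm lam) = Finset.univ \ NCP.lpos lam := by
  rw [ExcVal, excPos_wperm]
  apply Finset.eq_of_subset_of_card_le
  · intro v hv
    rcases Finset.mem_image.mp hv with ⟨j, hj, hjv⟩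
    have hjr : j ∉ NCP.rpos lam := (Finset.mem_sdiff.mp hj).2
    rw [← hjv, wperm_apply]
    exact (wfun_not_rpos lam hjr).1
  · rw [Finset.card_image_of_injOn (fun a _ b _ h => (wperm lam).injective h)]
    rw [card_compl_eq]

theorem wperm_mem_Cset : wperm lam ∈ NCP.Cset lam := by
  exact ⟨excVal_wperm lam, excPos_wperm lam⟩

end ForNCP

theorem mem_excPos_iff {w : Equiv.Perm (Fin n)} {j : Fin n} : j ∈ ExcPos w ↔ j ≤ w j := by
  simp [ExcPos]

theorem mem_excVal_iff {w : Equiv.Perm (Fin n)} {v : Fin n} :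
    v ∈ ExcVal w ↔ ∃ j, j ≤ w j ∧ w j = v := by
  simp only [ExcVal, ExcPos, Finset.mem_image, Finset.mem_filter, Finset.mem_univ, true_and]

theorem perm_card_compl (w : Equiv.Perm (Fin n)) :
    (Finset.univ \ ExcVal w).card = (Finset.univ \ ExcPos w).card := by
  rw [Finset.card_sdiff_of_subset (Finset.subset_univ _), Finset.card_sdiff_of_subset (Finset.subset_univ _)]
  have : (ExcVal w).card = (ExcPos w).card :=
    Finset.card_image_of_injOn (fun a _ b _ h => w.injective h)
  rw [this]

theorem perm_prefix (w : Equiv.Perm (Fin n)) (x : Fin n) :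
    ((Finset.univ \ ExcPos w).filter (· ≤ x)).card ≤
      ((Finset.univ \ ExcVal w).filter (· < x)).card := by
  apply Finset.card_le_card_of_injOn (fun j => w j)
  · intro j hj
    rcases Finset.mem_filter.mp hj with ⟨hj1, hj2⟩
    have hjn : j ∉ ExcPos w := (Finset.mem_sdiff.mp hj1).2
    have hwj : w j < j := not_le.mp (fun h => hjn (mem_excPos_iff.mpr h))
    refine Finset.mem_filter.mpr ⟨Finset.mem_sdiff.mpr ⟨Finset.mem_univ _, ?_⟩,
      lt_of_lt_of_le hwj hj2⟩
    intro hv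
    rcases mem_excVal_iff.mp hv with ⟨i, hi, hiw⟩
    have : i = j := w.injective hiw
    rw [this] at hi
    exact absurd hi (not_le.mpr hwj)
  · exact fun a _ b _ h => w.injective h

theorem exists_lam_for_perm (w : Equiv.Perm (Fin n)) :
    ∃ lam : NCP n, NCP.lpos lam = Finset.univ \ ExcVal w ∧
      NCP.rpos lam = Finset.univ \ ExcPos w := by
  obtain ⟨A, hA, hf, hs⟩ := ncp_exists (Finset.univ \ ExcVal w) (Finset.univ \ ExcPos w)
    (perm_card_compl w) (perm_prefix w)
  exact ⟨⟨A, hA⟩, hf, hs⟩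

theorem univ_sdiff_inj {s t : Finset (Fin n)} (h : Finset.univ \ s = Finset.univ \ t) :
    s = t := by
  ext y
  have := Finset.ext_iff.mp h y
  simp only [Finset.mem_sdiff, Finset.mem_univ, true_and] at this
  tauto

theorem cset_inj {lam mu : NCP n} {w : Equiv.Perm (Fin n)}
    (h1 : w ∈ NCP.Cset lam) (h2 : w ∈ NCP.Cset mu) : lam = mu := by
  have hl : NCP.lpos lam = NCP.lpos mu := univ_sdiff_inj (h1.1.symm.trans h2.1)
  have hr : NCP.rpos lam = NCP.rpos mu := univ_sdiff_inj (h1.2.symm.trans h2.2)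
  exact Subtype.ext (ncp_unique lam.2 mu.2 hl hr)

theorem cset_eq_class {lam : NCP n} {w : Equiv.Perm (Fin n)} (hw : w ∈ NCP.Cset lam) :
    NCP.Cset lam = {v | ExcEq v w} := by
  ext v
  simp only [NCP.Cset, Set.mem_setOf_eq, ExcEq]
  rw [hw.1, hw.2]

theorem exists_lam_class (w : Equiv.Perm (Fin n)) :
    ∃ lam : NCP n, NCP.Cset lam = {v | ExcEq v w} ∧ w ∈ NCP.Cset lam := by
  obtain ⟨lam, hl, hr⟩ := exists_lam_for_perm w
  have hw : w ∈ NCP.Cset lam := by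
    constructor
    · rw [hl, Finset.sdiff_sdiff_self_left, Finset.univ_inter]
    · rw [hr, Finset.sdiff_sdiff_self_left, Finset.univ_inter]
  exact ⟨lam, cset_eq_class hw, hw⟩

section DyckCount

open DyckStep

/-- interleaved word of a pair of indicator functions -/
def stepsOf (p m : ℕ → Bool) : ℕ → List DyckStep
  | 0 => []
  | k+1 => stepsOf p m k ++ [if m k then D else U, if p k then U else D]

def pcnt (p : ℕ → Bool) (k : ℕ) : ℕ := ((Finset.range k).filter (fun x => p x = true)).card

theorem pcnt_succ (p : ℕ → Bool) (k : ℕ) :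
    pcnt p (k+1) = pcnt p k + (if p k then 1 else 0) := by
  rw [pcnt, pcnt, Finset.range_add_one, Finset.filter_insert]
  by_cases h : p k = true
  · rw [if_pos h, Finset.card_insert_of_notMem (by simp), if_pos h]
  · rw [if_neg h, if_neg (by simpa using h)]; omega

theorem pcnt_le_succ (p : ℕ → Bool) (k : ℕ) : pcnt p k ≤ pcnt p (k+1) := by
  rw [pcnt_succ]; split <;> omega

theorem length_stepsOf (p m : ℕ → Bool) : ∀ k, (stepsOf p m k).length = 2 * k := by
  intro k; induction k with
  | zero => simp [stepsOf]
  | succ k ih => simp [stepsOf, ih]; omega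

theorem count_stepsOf_U (p m : ℕ → Bool) :
    ∀ k, (stepsOf p m k).count U + pcnt m k = k + pcnt p k := by
  intro k; induction k with
  | zero => simp [stepsOf, pcnt]
  | succ k ih =>
    rw [stepsOf, List.count_append, pcnt_succ, pcnt_succ]
    by_cases hp : p k <;> by_cases hm : m k <;>
      simp [hp, hm, List.count_cons] <;> omega

theorem count_stepsOf_D (p m : ℕ → Bool) :
    ∀ k, (stepsOf p m k).count D + pcnt p k = k + pcnt m k := by
  intro k; induction k with
  | zero => simp [stepsOf, pcnt]
  | succ k ih =>
    rw [stepsOf, List.count_append, pcnt_succ, pcnt_succ]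
    by_cases hp : p k <;> by_cases hm : m k <;>
      simp [hp, hm, List.count_cons] <;> omega

theorem stepsOf_take_even (p m : ℕ → Bool) :
    ∀ k x, x ≤ k → (stepsOf p m k).take (2*x) = stepsOf p m x := by
  intro k; induction k with
  | zero =>
    intro x hx
    have : x = 0 := by omega
    subst this; simp [stepsOf]
  | succ k ih =>
    intro x hx
    rcases Nat.lt_or_ge x (k+1) with h | h
    · have hx' : x ≤ k := by omega
      rw [stepsOf, List.take_append, length_stepsOf]
      have h0 : 2*x - 2*k = 0 := by omega
      rw [h0]
      simp [ih x hx']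
    · have hxk : x = k + 1 := by omega
      subst hxk
      apply List.take_of_length_le
      rw [length_stepsOf]

theorem stepsOf_take_odd (p m : ℕ → Bool) :
    ∀ k x, x < k →
      (stepsOf p m k).take (2*x+1) = stepsOf p m x ++ [if m x then D else U] := by
  intro k; induction k with
  | zero => intro x hx; omega
  | succ k ih =>
    intro x hx
    rcases Nat.lt_or_ge x k with h | h
    · rw [stepsOf, List.take_append, length_stepsOf]
      have h0 : 2*x+1 - 2*k = 0 := by omega
      rw [h0]
      simp [ih x h]
    · have hxk : x = k := by omega
      subst hxk
      rw [stepsOf, List.take_append, length_stepsOf]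
      have h1 : (stepsOf p m x).take (2*x+1) = stepsOf p m x :=
        List.take_of_length_le (by rw [length_stepsOf]; omega)
      have h2 : 2*x+1 - 2*x = 1 := by omega
      rw [h1, h2]
      simp

theorem prefix_ok (p m : ℕ → Bool) :
    ∀ k, (∀ x, x < k → pcnt m (x+1) ≤ pcnt p x) →
      ∀ i, ((stepsOf p m k).take i).count D ≤ ((stepsOf p m k).take i).count U := by
  intro k; induction k with
  | zero => intro _ i; simp [stepsOf]
  | succ k ih =>
    intro H i
    have H' : ∀ x, x < k → pcnt m (x+1) ≤ pcnt p x := fun x hx => H x (by omega)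
    have hU := count_stepsOf_U p m k
    have hD := count_stepsOf_D p m k
    rcases show i ≤ 2*k ∨ i = 2*k+1 ∨ 2*k+2 ≤ i by omega with h | h | h
    · have e : (stepsOf p m (k+1)).take i = (stepsOf p m k).take i := by
        rw [stepsOf, List.take_append, length_stepsOf]
        have h0 : i - 2*k = 0 := by omega
        rw [h0]; simp
      rw [e]; exact ih H' i
    · have e : (stepsOf p m (k+1)).take i = stepsOf p m k ++ [if m k then D else U] := by
        rw [h]
        exact stepsOf_take_odd p m (k+1) k (by omega)
      rw [e]
      have hc := H k (by omega)
      rw [pcnt_succ] at hc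
      have htk : (stepsOf p m k).count D ≤ (stepsOf p m k).count U := by
        have := ih H' (2*k)
        rw [List.take_of_length_le (by rw [length_stepsOf])] at this
        exact this
      by_cases hm : m k <;>
        simp [hm, List.count_append, List.count_cons] at hc ⊢ <;> omega
    · have e : (stepsOf p m (k+1)).take i = stepsOf p m (k+1) :=
        List.take_of_length_le (by rw [length_stepsOf]; omega)
      rw [e]
      have hU' := count_stepsOf_U p m (k+1)
      have hD' := count_stepsOf_D p m (k+1)
      have hc := H k (by omega)
      have hple := pcnt_le_succ p k
      omega

theorem cond_of_prefix (p m : ℕ → Bool) (k : ℕ)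
    (H : ∀ i, ((stepsOf p m k).take i).count D ≤ ((stepsOf p m k).take i).count U) :
    ∀ x, x < k → pcnt m (x+1) ≤ pcnt p x := by
  intro x hx
  have e := stepsOf_take_odd p m k x hx
  have h1 := H (2*x+1)
  rw [e] at h1
  have hU := count_stepsOf_U p m x
  have hD := count_stepsOf_D p m x
  rw [pcnt_succ]
  by_cases hm : m x <;> simp [hm, List.count_append, List.count_cons] at h1 ⊢ <;> omega

theorem stepsOf_congr {p m p' m' : ℕ → Bool} :
    ∀ k, (∀ x, x < k → p x = p' x) → (∀ x, x < k → m x = m' x) →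
      stepsOf p m k = stepsOf p' m' k := by
  intro k; induction k with
  | zero => intros; rfl
  | succ k ih =>
    intro hp hm
    rw [stepsOf, stepsOf, ih (fun x hx => hp x (by omega)) (fun x hx => hm x (by omega)),
      hp k (by omega), hm k (by omega)]

theorem pcnt_congr {p p' : ℕ → Bool} (k : ℕ) (h : ∀ x, x < k → p x = p' x) :
    pcnt p k = pcnt p' k := by
  rw [pcnt, pcnt]
  congr 1
  apply Finset.filter_congr
  intro x hx
  rw [h x (Finset.mem_range.mp hx)]

theorem stepsOf_inj {p m p' m' : ℕ → Bool} :
    ∀ k, stepsOf p m k = stepsOf p' m' k → ∀ x, x < k → p x = p' x ∧ m x = m' x := by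
  intro k; induction k with
  | zero => intro _ x hx; omega
  | succ k ih =>
    intro heq x hx
    rw [stepsOf, stepsOf] at heq
    obtain ⟨h1, h2⟩ := List.append_inj heq (by rw [length_stepsOf, length_stepsOf])
    have hmk : m k = m' k := by
      have := (List.cons.injEq _ _ _ _).mp h2
      cases hm : m k <;> cases hm' : m' k <;> simp_all
    have hpk : p k = p' k := by
      have := (List.cons.injEq _ _ _ _).mp h2
      cases hp : p k <;> cases hp' : p' k <;> simp_all
    rcases Nat.lt_or_ge x k with h | h
    · exact ih h1 x h
    · have : x = k := by omega
      subst this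
      exact ⟨hpk, hmk⟩

theorem exists_pair_of_list :
    ∀ k (l : List DyckStep), l.length = 2*(k:ℕ) → ∃ p m, l = stepsOf p m k := by
  intro k; induction k with
  | zero =>
    intro l hl
    exact ⟨fun _ => true, fun _ => true, List.eq_nil_of_length_eq_zero hl⟩
  | succ k ih =>
    intro l hl
    have hsplit : l = l.take (2*k) ++ l.drop (2*k) := (List.take_append_drop _ _).symm
    have hlen0 : (l.take (2*k)).length = 2*k := by
      rw [List.length_take]; omega
    have hlen1 : (l.drop (2*k)).length = 2 := by
      rw [List.length_drop]; omega
    obtain ⟨a, b, hab⟩ := List.length_eq_two.mp hlen1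
    obtain ⟨p₀, m₀, h₀⟩ := ih (l.take (2*k)) hlen0
    refine ⟨fun x => if x = k then (b == U) else p₀ x,
            fun x => if x = k then (a == D) else m₀ x, ?_⟩
    rw [stepsOf]
    have hcongr : stepsOf (fun x => if x = k then (b == U) else p₀ x)
        (fun x => if x = k then (a == D) else m₀ x) k = stepsOf p₀ m₀ k := by
      apply stepsOf_congr
      · intro x hx; simp [Nat.ne_of_lt hx]
      · intro x hx; simp [Nat.ne_of_lt hx]
    rw [hcongr, ← h₀]
    have ha : (if (if (k:ℕ) = k then (a == D) else m₀ k) then D else U) = a := by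
      simp only [if_pos rfl]
      cases a <;> simp
    have hb : (if (if (k:ℕ) = k then (b == U) else p₀ k) then U else D) = b := by
      simp only [if_pos rfl]
      cases b <;> simp
    rw [ha, hb, ← hab]
    exact hsplit

end DyckCount

section Translate

/-- indicator function of a finset of `Fin n` -/
noncomputable def boolOf (S : Finset (Fin n)) : ℕ → Bool := fun x =>
  decide (∃ h : x < n, (⟨x, h⟩ : Fin n) ∈ S)

theorem mem_iff_boolOf (S : Finset (Fin n)) (y : Fin n) : y ∈ S ↔ boolOf S ↑y = true := by
  simp only [boolOf, decide_eq_true_eq]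
  constructor
  · intro h; exact ⟨y.2, by rwa [Fin.eta]⟩
  · rintro ⟨h, hm⟩; rwa [Fin.eta] at hm

theorem pcnt_boolOf (S : Finset (Fin n)) {j : ℕ} (hj : j ≤ n) :
    pcnt (boolOf S) j = (S.filter (fun y : Fin n => (y : ℕ) < j)).card := by
  rw [pcnt]
  apply Finset.card_bij (fun a ha =>
    (⟨a, lt_of_lt_of_le (Finset.mem_range.mp (Finset.mem_filter.mp ha).1) hj⟩ : Fin n))
  · intro a ha
    rcases Finset.mem_filter.mp ha with ⟨har, hab⟩
    have hex : ∃ h : a < n, (⟨a, h⟩ : Fin n) ∈ S := by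
      simpa [boolOf] using hab
    rcases hex with ⟨h', hm⟩
    exact Finset.mem_filter.mpr ⟨hm, Finset.mem_range.mp har⟩
  · intro a ha b hb heq
    exact congrArg Fin.val heq
  · intro y hy
    rcases Finset.mem_filter.mp hy with ⟨hyS, hyj⟩
    refine ⟨(y : ℕ), Finset.mem_filter.mpr ⟨Finset.mem_range.mpr hyj, ?_⟩, Fin.ext rfl⟩
    simp only [boolOf, decide_eq_true_eq]
    exact ⟨y.2, by rwa [Fin.eta]⟩

theorem boolOf_filter (q : ℕ → Bool) (x : ℕ) (hx : x < n) :
    boolOf (Finset.univ.filter (fun y : Fin n => q ↑y = true)) x = q x := by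
  by_cases hq : q x = true
  · rw [hq]
    simp only [boolOf, decide_eq_true_eq]
    exact ⟨hx, Finset.mem_filter.mpr ⟨Finset.mem_univ _, hq⟩⟩
  · have hfalse : q x = false := by simpa using hq
    rw [hfalse]
    simp only [boolOf]
    apply decide_eq_false
    rintro ⟨h, hm⟩
    exact hq (Finset.mem_filter.mp hm).2

theorem pcnt_boolOf_le (M : Finset (Fin n)) (x : Fin n) :
    pcnt (boolOf M) ((x : ℕ) + 1) = (M.filter (· ≤ x)).card := by
  have he : (M.filter (fun y : Fin n => (y : ℕ) < (x : ℕ) + 1)) = M.filter (· ≤ x) :=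
    Finset.filter_congr (fun y _ => Nat.lt_succ_iff.trans Fin.le_def.symm)
  rw [pcnt_boolOf M (by omega : (x : ℕ) + 1 ≤ n), he]

theorem pcnt_boolOf_lt (P : Finset (Fin n)) (x : Fin n) :
    pcnt (boolOf P) (x : ℕ) = (P.filter (· < x)).card := by
  have he : (P.filter (fun y : Fin n => (y : ℕ) < (x : ℕ))) = P.filter (· < x) :=
    Finset.filter_congr (fun y _ => Fin.lt_def.symm)
  rw [pcnt_boolOf P (le_of_lt x.2), he]

theorem pcnt_boolOf_card (S : Finset (Fin n)) : pcnt (boolOf S) n = S.card := by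
  rw [pcnt_boolOf S le_rfl, Finset.filter_true_of_mem (fun y _ => y.2)]

end Translate

/-- pairs of endpoint sets -/
def PairsT (n : ℕ) := {pm : Finset (Fin n) × Finset (Fin n) //
  pm.1.card = pm.2.card ∧
    ∀ x : Fin n, (pm.2.filter (· ≤ x)).card ≤ (pm.1.filter (· < x)).card}

noncomputable def pairOfNCP (lam : NCP n) : PairsT n :=
  ⟨(NCP.lpos lam, NCP.rpos lam), ForNCP.card_lpos_eq lam, fun x => ncp_prefix lam.2 x⟩

theorem pairOfNCP_bij : Function.Bijective (pairOfNCP (n := n)) := by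
  constructor
  · intro lam mu heq
    have h1 : NCP.lpos lam = NCP.lpos mu := congrArg (fun z => z.1.1) heq
    have h2 : NCP.rpos lam = NCP.rpos mu := congrArg (fun z => z.1.2) heq
    exact Subtype.ext (ncp_unique lam.2 mu.2 h1 h2)
  · rintro ⟨⟨P, M⟩, hcard, hpre⟩
    obtain ⟨A, hA, hf, hs⟩ := ncp_exists P M hcard hpre
    exact ⟨⟨A, hA⟩, Subtype.ext (Prod.ext hf hs)⟩

open DyckStep

noncomputable def dyckOfPair (pm : PairsT n) : {d : DyckWord // d.semilength = n} := by
  have hU := count_stepsOf_U (boolOf pm.1.1) (boolOf pm.1.2) n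
  have hD := count_stepsOf_D (boolOf pm.1.1) (boolOf pm.1.2) n
  have hpc : pcnt (boolOf pm.1.1) n = pcnt (boolOf pm.1.2) n := by
    rw [pcnt_boolOf_card, pcnt_boolOf_card]; exact pm.2.1
  refine ⟨⟨stepsOf (boolOf pm.1.1) (boolOf pm.1.2) n, by omega, ?_⟩, ?_⟩
  · apply prefix_ok
    intro x hx
    have hcond := pm.2.2 ⟨x, hx⟩
    have e1 := pcnt_boolOf_le pm.1.2 ⟨x, hx⟩
    have e2 := pcnt_boolOf_lt pm.1.1 ⟨x, hx⟩
    simp only [Fin.val_mk] at e1 e2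
    omega
  · show (stepsOf (boolOf pm.1.1) (boolOf pm.1.2) n).count U = n
    omega

theorem dyckOfPair_bij : Function.Bijective (dyckOfPair (n := n)) := by
  constructor
  · intro pm pm' heq
    have hlist : stepsOf (boolOf pm.1.1) (boolOf pm.1.2) n
        = stepsOf (boolOf pm'.1.1) (boolOf pm'.1.2) n :=
      congrArg (fun z => z.1.toList) heq
    have hvals := stepsOf_inj n hlist
    have hP : pm.1.1 = pm'.1.1 := by
      ext y
      rw [mem_iff_boolOf, mem_iff_boolOf, (hvals ↑y y.2).1]
    have hM : pm.1.2 = pm'.1.2 := by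
      ext y
      rw [mem_iff_boolOf, mem_iff_boolOf, (hvals ↑y y.2).2]
    exact Subtype.ext (Prod.ext hP hM)
  · rintro ⟨d, hd⟩
    have hlen : d.toList.length = 2 * n := by
      rw [← d.two_mul_semilength_eq_length, hd]
    obtain ⟨p, m, hl⟩ := exists_pair_of_list n d.toList hlen
    set P := Finset.univ.filter (fun x : Fin n => p ↑x = true) with hPdef
    set M := Finset.univ.filter (fun x : Fin n => m ↑x = true) with hMdef
    have hbP : ∀ x, x < n → boolOf P x = p x := fun x hx => boolOf_filter p x hx
    have hbM : ∀ x, x < n → boolOf M x = m x := fun x hx => boolOf_filter m x hx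
    have hsteps : stepsOf (boolOf P) (boolOf M) n = d.toList := by
      rw [hl]
      exact stepsOf_congr n hbP hbM
    have H' : ∀ i, ((stepsOf p m n).take i).count D ≤ ((stepsOf p m n).take i).count U := by
      intro i
      rw [← hl]
      exact d.count_D_le_count_U i
    have hcond1 : P.card = M.card := by
      have htot := d.count_U_eq_count_D
      rw [hl] at htot
      have hU := count_stepsOf_U p m n
      have hD := count_stepsOf_D p m n
      rw [← pcnt_boolOf_card P, ← pcnt_boolOf_card M, pcnt_congr n hbP, pcnt_congr n hbM]
      omega
    have hcond2 : ∀ x : Fin n, (M.filter (· ≤ x)).card ≤ (P.filter (· < x)).card := by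
      intro x
      have hc := cond_of_prefix p m n H' ↑x x.2
      have e1 : pcnt (boolOf M) ((x : ℕ) + 1) = pcnt m ((x : ℕ) + 1) :=
        pcnt_congr _ (fun y hy => hbM y (by omega))
      have e2 : pcnt (boolOf P) (x : ℕ) = pcnt p (x : ℕ) :=
        pcnt_congr _ (fun y hy => hbP y (by omega))
      have e3 := pcnt_boolOf_le M x
      have e4 := pcnt_boolOf_lt P x
      omega
    refine ⟨⟨(P, M), hcond1, hcond2⟩, ?_⟩
    apply Subtype.ext
    apply DyckWord.ext
    exact hsteps

theorem count_main (n : ℕ) : Nat.card (Quotient (excSetoid n)) = catalan n := by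
  classical
  have hbij : Function.Bijective
      (fun lam : NCP n => Quotient.mk (excSetoid n) (ForNCP.wperm lam)) := by
    constructor
    · intro lam mu heq
      have hex : ExcEq (ForNCP.wperm lam) (ForNCP.wperm mu) := Quotient.exact heq
      have h1 := ForNCP.wperm_mem_Cset lam
      have h2 := ForNCP.wperm_mem_Cset mu
      have h3 : ForNCP.wperm mu ∈ NCP.Cset lam :=
        ⟨hex.1.symm.trans h1.1, hex.2.symm.trans h1.2⟩
      exact cset_inj h3 h2
    · intro q
      obtain ⟨w, hw⟩ := Quot.exists_rep q
      obtain ⟨lam, _, hmem⟩ := exists_lam_class w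
      refine ⟨lam, ?_⟩
      rw [← hw]
      apply Quotient.sound
      have h1 := ForNCP.wperm_mem_Cset lam
      exact ⟨h1.1.trans hmem.1.symm, h1.2.trans hmem.2.symm⟩
  have e1 := Nat.card_eq_of_bijective _ hbij
  have e2 := Nat.card_eq_of_bijective _ (pairOfNCP_bij (n := n))
  have e3 := Nat.card_eq_of_bijective _ (dyckOfPair_bij (n := n))
  rw [← e1, e2, e3, Nat.card_eq_fintype_card,
    DyckWord.card_dyckWord_semilength_eq_catalan]

end StmtAux


/-- `λ ↦ C_λ` is a bijection from noncrossing partitions of size `n`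
to the excedance classes `S_n/∼`; in particular the number of excedance classes is the
`n`-th Catalan number. -/
theorem stmt3 (n : ℕ) :
    (∀ lam : NCP n, (NCP.Cset lam).Nonempty) ∧
    (∀ lam mu : NCP n, lam ≠ mu → Disjoint (NCP.Cset lam) (NCP.Cset mu)) ∧
    (∀ lam mu : NCP n, NCP.Cset lam = NCP.Cset mu → lam = mu) ∧
    (∀ w : Equiv.Perm (Fin n), ∃ lam : NCP n,
      NCP.Cset lam = {v | ExcEq v w} ∧ w ∈ NCP.Cset lam) ∧
    Nat.card (Quotient (excSetoid n)) = catalan n := by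
  refine ⟨?_, ?_, ?_, ?_, ?_⟩
  · exact fun lam => ⟨_, StmtAux.ForNCP.wperm_mem_Cset lam⟩
  · intro lam mu hne
    rw [Set.disjoint_left]
    intro w h1 h2
    exact hne (StmtAux.cset_inj h1 h2)
  · intro lam mu heq
    have h1 := StmtAux.ForNCP.wperm_mem_Cset lam
    have h2 : StmtAux.ForNCP.wperm lam ∈ NCP.Cset mu := heq ▸ h1
    exact StmtAux.cset_inj h1 h2
  · exact StmtAux.exists_lam_class
  · exact StmtAux.count_main n
end
end

section
/- For every noncrossing partition λ of size n, Q_λ ∈ C_λ; that is, E_val(Q_λ) = {1,…,n} ∖ λ⁺ and E_pos(Q_λ) = {1,…,n} ∖ λ⁻. -/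
open scoped Classical

noncomputable section

open MvPolynomial

/-- `Q_λ ∈ C_λ`, i.e. `E_val(Q_λ) = {1,…,n} ∖ λ⁺` and
`E_pos(Q_λ) = {1,…,n} ∖ λ⁻`. -/
theorem stmt4 (n : ℕ) (lam : NCP n) (Q : Equiv.Perm (Fin n)) (hQ : NCP.IsQ lam Q) :
    ExcVal Q = Finset.univ \ NCP.lpos lam ∧ ExcPos Q = Finset.univ \ NCP.rpos lam := by
  -- uniqueness of left endpoints
  have uniq : ∀ i i' j : Fin n, (i, j) ∈ lam.1 → (i', j) ∈ lam.1 → i = i' := by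
    intro i i' j h h'
    by_contra hne
    rcases lt_trichotomy i i' with hlt | heq | hlt
    · exact lam.2.2 (i, j) h (i', j) h'
        (by simp [Prod.ext_iff]; intro hc; exact hne hc)
        ⟨le_of_lt hlt, lam.2.1 _ h', le_refl _⟩
    · exact hne heq
    · exact lam.2.2 (i', j) h' (i, j) h
        (by simp [Prod.ext_iff]; intro hc; exact hne hc.symm)
        ⟨le_of_lt hlt, lam.2.1 _ h, le_refl _⟩
  have hQr : ∀ j : Fin n, (∃ i, (i, j) ∈ lam.1) → (Q j, j) ∈ lam.1 := by
    intro j h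
    rw [hQ j, NCP.Qfun, dif_pos h]
    exact h.choose_spec
  have hQnr : ∀ j : Fin n, ¬(∃ i, (i, j) ∈ lam.1) → Q j = NCP.compMax lam j := by
    intro j h
    rw [hQ j, NCP.Qfun, dif_neg h]
  have hrpos : ∀ j : Fin n, j ∈ NCP.rpos lam ↔ ∃ i, (i, j) ∈ lam.1 := by
    intro j
    constructor
    · intro h
      rcases Finset.mem_image.mp h with ⟨p, hp, hpj⟩
      exact ⟨p.1, by rwa [show (p.1, j) = p from Prod.ext rfl hpj.symm]⟩
    · rintro ⟨i, hi⟩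
      exact Finset.mem_image.mpr ⟨(i, j), hi, rfl⟩
  have hpos : ExcPos Q = Finset.univ \ NCP.rpos lam := by
    ext j
    simp only [ExcPos, Finset.mem_filter, Finset.mem_univ, true_and, Finset.mem_sdiff]
    constructor
    · intro hle hj
      exact absurd (lam.2.1 _ (hQr j ((hrpos j).mp hj))) (not_lt.mpr hle)
    · intro hj
      rw [hQnr j (fun h => hj ((hrpos j).mpr h))]
      exact Finset.le_max' _ j (NCP.mem_component_self lam j)
  refine ⟨?_, hpos⟩
  have himg : (NCP.rpos lam).image Q = NCP.lpos lam := by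
    apply Finset.Subset.antisymm
    · intro i hi
      rcases Finset.mem_image.mp hi with ⟨j, hj, hji⟩
      exact Finset.mem_image.mpr ⟨(Q j, j), hQr j ((hrpos j).mp hj), by simp [hji]⟩
    · intro i hi
      rcases Finset.mem_image.mp hi with ⟨p, hp, hpi⟩
      have hk : p.2 ∈ NCP.rpos lam := Finset.mem_image.mpr ⟨p, hp, rfl⟩
      have hQk : (Q p.2, p.2) ∈ lam.1 := hQr p.2 ((hrpos p.2).mp hk)
      have : Q p.2 = i := uniq _ _ _ hQk (by rwa [show (i, p.2) = p from Prod.ext hpi.symm rfl])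
      exact Finset.mem_image.mpr ⟨p.2, hk, this⟩
  have hinj : Function.Injective (Q : Fin n → Fin n) := Q.injective
  rw [ExcVal, hpos, Finset.image_sdiff _ _ hinj, himg]
  congr 1
  ext i
  simp only [Finset.mem_image, Finset.mem_univ, true_and, iff_true]
  exact ⟨Q.symm i, Q.apply_symm_apply i⟩
end
end

section
/- Let λ be a noncrossing partition of size n ≥ 0 and let w ∈ C_λ. Then for all 1 ≤ k ≤ n: |{i : k < i ≤ n and w(i) < k}| = |λ⁺ ∩ {1,…,k−1}| − |λ⁻ ∩ {1,…,k}|, and |{i : 1 ≤ i ≤ k and w(i) > k}| = |λ⁺ ∩ {1,…,k}| − |λ⁻ ∩ {1,…,k}|. -/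
open scoped Classical

noncomputable section

open MvPolynomial

private lemma card_lt_filter' {n m : ℕ} (h : m ≤ n) :
    (Finset.univ.filter fun j : Fin n => (j : ℕ) < m).card = m := by
  have he : (Finset.univ.filter fun j : Fin n => (j : ℕ) < m)
      = Finset.univ.image (Fin.castLE h) := by
    ext j
    simp only [Finset.mem_filter, Finset.mem_univ, true_and, Finset.mem_image]
    constructor
    · intro hj; exact ⟨⟨j, hj⟩, by ext; simp⟩
    · rintro ⟨a, rfl⟩; exact a.isLt
  rw [he, Finset.card_image_of_injective _ (Fin.castLE_injective h),
    Finset.card_univ, Fintype.card_fin]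

private lemma perm_count' {n : ℕ} (w : Equiv.Perm (Fin n)) {m : ℕ} (h : m ≤ n) :
    (Finset.univ.filter fun i : Fin n => (w i : ℕ) < m).card = m := by
  have he : (Finset.univ.filter fun j : Fin n => (j : ℕ) < m)
      = (Finset.univ.filter fun a : Fin n => (w a : ℕ) < m).image w := by
    conv_lhs => rw [← Finset.image_univ_equiv w]
    rw [Finset.filter_image]
  have := card_lt_filter' (n := n) h
  rw [he, Finset.card_image_of_injective _ w.injective] at this
  exact this

private lemma card_split' {α : Type*} [Fintype α] [DecidableEq α] {p q r : α → Prop}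
    [DecidablePred p] [DecidablePred q] [DecidablePred r]
    (h : ∀ x, p x ↔ q x ∨ r x) (hd : ∀ x, q x → r x → False) :
    (Finset.univ.filter p).card
      = (Finset.univ.filter q).card + (Finset.univ.filter r).card := by
  rw [← Finset.card_union_of_disjoint]
  · congr 1; ext x; simp [h x]
  · rw [Finset.disjoint_left]; intro x hx hx'
    simp only [Finset.mem_filter, Finset.mem_univ, true_and] at hx hx'
    exact hd x hx hx'

private lemma card_filter_val' {n : ℕ} (S : Finset (Fin n)) (p : ℕ → Prop) [DecidablePred p] :
    (Finset.filter p (do let a ← S; pure ((a : ℕ)))).card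
      = (S.filter fun a : Fin n => p (a : ℕ)).card := by
  have hb : (do let a ← S; pure ((a : ℕ)) : Finset ℕ)
      = @Finset.sup (Finset ℕ) (Fin n)
          (@Lattice.toSemilatticeSup (Finset ℕ)
            (@Finset.instLattice ℕ (fun a b => Classical.propDecidable (a = b))))
          Finset.instOrderBot S (fun a => {(a : ℕ)}) := rfl
  have h1 : (Finset.filter p (do let a ← S; pure ((a : ℕ))))
      = (S.filter fun a : Fin n => p (a : ℕ)).image (fun a : Fin n => (a : ℕ)) := by
    rw [hb]
    ext x
    simp only [Finset.mem_filter, Finset.mem_sup, Finset.mem_image,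
      Finset.mem_singleton]
    constructor
    · rintro ⟨⟨a, ha, rfl⟩, hp⟩; exact ⟨a, ⟨ha, hp⟩, rfl⟩
    · rintro ⟨a, ⟨ha, hp⟩, rfl⟩; exact ⟨⟨a, ha, rfl⟩, hp⟩
  rw [h1, Finset.card_image_of_injective _ Fin.val_injective]

private lemma card_sdiff_filter' {n : ℕ} (S : Finset (Fin n)) (p : Fin n → Prop)
    [DecidablePred p] :
    ((Finset.univ \ S).filter p).card + (S.filter p).card
      = (Finset.univ.filter p).card := by
  have he : (Finset.univ \ S).filter p = (Finset.univ.filter p) \ (S.filter p) := by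
    ext x; simp only [Finset.mem_filter, Finset.mem_sdiff, Finset.mem_univ, true_and]; tauto
  rw [he, Finset.card_sdiff_add_card_eq_card
    (Finset.filter_subset_filter _ (Finset.subset_univ S))]


private lemma excval_count' {n : ℕ} (lam : NCP n) (w : Equiv.Perm (Fin n))
    (hw1 : ExcVal w = Finset.univ \ NCP.lpos lam) {m : ℕ} (h : m ≤ n) :
    (Finset.univ.filter fun i : Fin n => i ≤ w i ∧ (w i : ℕ) < m).card
      + ((NCP.lpos lam).filter fun a : Fin n => (a : ℕ) < m).card = m := by
  have h1 : ((ExcVal w).filter fun v : Fin n => (v : ℕ) < m)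
      = (Finset.univ.filter fun i : Fin n => i ≤ w i ∧ (w i : ℕ) < m).image w := by
    unfold ExcVal ExcPos
    rw [Finset.filter_image, Finset.filter_filter]
  have h2 := card_sdiff_filter' (NCP.lpos lam) (fun v : Fin n => (v : ℕ) < m)
  rw [← hw1, h1, Finset.card_image_of_injective _ w.injective,
    card_lt_filter' h] at h2
  exact h2

private lemma excpos_count' {n : ℕ} (lam : NCP n) (w : Equiv.Perm (Fin n))
    (hw2 : ExcPos w = Finset.univ \ NCP.rpos lam) {m : ℕ} (h : m ≤ n) :
    (Finset.univ.filter fun i : Fin n => i ≤ w i ∧ (i : ℕ) < m).card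
      + ((NCP.rpos lam).filter fun a : Fin n => (a : ℕ) < m).card = m := by
  have h1 : ((ExcPos w).filter fun v : Fin n => (v : ℕ) < m)
      = Finset.univ.filter fun i : Fin n => i ≤ w i ∧ (i : ℕ) < m := by
    unfold ExcPos
    rw [Finset.filter_filter]
  have h2 := card_sdiff_filter' (NCP.rpos lam) (fun v : Fin n => (v : ℕ) < m)
  rw [← hw2, h1, card_lt_filter' h] at h2
  exact h2

/-- for `w ∈ C_λ` and `1 ≤ k ≤ n`,
`|{i : k < i ≤ n, w(i) < k}| = |λ⁺ ∩ {1,…,k−1}| − |λ⁻ ∩ {1,…,k}|` and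
`|{i : 1 ≤ i ≤ k, w(i) > k}| = |λ⁺ ∩ {1,…,k}| − |λ⁻ ∩ {1,…,k}|` (in `ℤ`;
1-based labels: position `i : Fin n` has label `(i : ℕ) + 1`). -/
theorem stmt5 (n : ℕ) (lam : NCP n) (w : Equiv.Perm (Fin n)) (hw : w ∈ NCP.Cset lam) :
    ∀ k : ℕ, 1 ≤ k → k ≤ n →
      (((Finset.univ.filter
            (fun i : Fin n => k ≤ (i : ℕ) ∧ ((w i : ℕ) + 1 < k))).card : ℤ) =
        (((NCP.lpos lam).filter (fun a => (a : ℕ) + 1 < k)).card : ℤ) -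
          (((NCP.rpos lam).filter (fun a => (a : ℕ) < k)).card : ℤ)) ∧
      (((Finset.univ.filter
            (fun i : Fin n => (i : ℕ) < k ∧ k ≤ (w i : ℕ))).card : ℤ) =
        (((NCP.lpos lam).filter (fun a => (a : ℕ) < k)).card : ℤ) -
          (((NCP.rpos lam).filter (fun a => (a : ℕ) < k)).card : ℤ)) := by
  obtain ⟨hw1, hw2⟩ := hw
  intro k hk1 hk2
  simp only [card_filter_val']
  set m : ℕ := k - 1 with hmdef
  have hmk : m + 1 = k := by omega
  have hmn : m ≤ n := by omega
  -- parametric counts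
  have hEm := excval_count' lam w hw1 hmn
  have hEk := excval_count' lam w hw1 hk2
  have hFk := excpos_count' lam w hw2 hk2
  -- filter congr : a + 1 < k ↔ a < m
  have hL1 : ((NCP.lpos lam).filter (fun a : Fin n => (a : ℕ) + 1 < k))
      = ((NCP.lpos lam).filter fun a : Fin n => (a : ℕ) < m) := by
    apply Finset.filter_congr
    intro a _
    constructor <;> intro <;> omega
  -- splits
  have s1 : (Finset.univ.filter fun i : Fin n => (w i : ℕ) < m).card
      = (Finset.univ.filter fun i : Fin n => k ≤ (i : ℕ) ∧ ((w i : ℕ) + 1 < k)).card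
        + (Finset.univ.filter fun i : Fin n => (i : ℕ) < k ∧ (w i : ℕ) < m).card := by
    apply card_split'
    · intro x; omega
    · intro x hx hx'; omega
  have s2 : (Finset.univ.filter fun i : Fin n => (i : ℕ) < k ∧ (w i : ℕ) < m).card
      = (Finset.univ.filter fun i : Fin n => i ≤ w i ∧ (w i : ℕ) < m).card
        + (Finset.univ.filter fun i : Fin n => (i : ℕ) < k ∧ (w i : ℕ) < (i : ℕ)).card := by
    apply card_split'
    · intro x; rw [Fin.le_def]; omega
    · intro x hx hx'; rw [Fin.le_def] at hx; omega
  have s3 : (Finset.univ.filter fun i : Fin n => i ≤ w i ∧ (i : ℕ) < k).card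
      = (Finset.univ.filter fun i : Fin n => (i : ℕ) < k ∧ k ≤ (w i : ℕ)).card
        + (Finset.univ.filter fun i : Fin n => i ≤ w i ∧ (w i : ℕ) < k).card := by
    apply card_split'
    · intro x; rw [Fin.le_def]; omega
    · intro x hx hx'; omega
  have s4 : (Finset.univ.filter fun i : Fin n => (i : ℕ) < k).card
      = (Finset.univ.filter fun i : Fin n => i ≤ w i ∧ (i : ℕ) < k).card
        + (Finset.univ.filter fun i : Fin n => (i : ℕ) < k ∧ (w i : ℕ) < (i : ℕ)).card := by
    apply card_split'
    · intro x; rw [Fin.le_def]; omega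
    · intro x hx hx'; rw [Fin.le_def] at hx; omega
  have b1 : (Finset.univ.filter fun i : Fin n => (w i : ℕ) < m).card = m :=
    perm_count' w hmn
  have b2 : (Finset.univ.filter fun i : Fin n => (i : ℕ) < k).card = k :=
    card_lt_filter' hk2
  constructor
  · rw [hL1]; omega
  · omega
end
end
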